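/- arXiv:1210.5910 — 8 statements merged into one kernel-verified Lean document; each statement's English description precedes it below -/
import Mathlib

section
/- Let D ⊆ ℂ be open, f : D → ℂ, z ∈ D, and z₀ ∈ ℂ with z₀ ≠ z. Suppose f is differentiable at z in the real sense with real Fréchet derivative L; set f_x = L(1), f_y = L(i), f_z = (f_x − i·f_y)/2, f_{z̄} = (f_x + i·f_y)/2, and Jacobian J_f(z) = |f_z|² − |f_{z̄}|². If J_f(z) ≠ 0 and μ = f_{z̄}/f_z satisfies |μ| < 1, then |∂_T^{z₀} f(z)|² / |J_f(z)| = |1 − ((conj(z − z₀))/(z − z₀))·μ|² / (1 − |μ|²), where ∂_T^{z₀} f(z) is the one-sided derivative of f at z in the tangent direction τ = i·(z − z₀)/|z − z₀|, i.e., ∂_T^{z₀} f(z) = lim_{t→0⁺} (f(z + t·τ) − f(z))/t. -/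
open Filter Topology

/-- If `f` is real-differentiable at `z ∈ D` (open) with real Fréchet derivative `L`,
`f_z = (L 1 − i·L i)/2`, `f_{z̄} = (L 1 + i·L i)/2`, Jacobian `J = |f_z|² − |f_{z̄}|² ≠ 0`,
and `μ = f_{z̄}/f_z` satisfies `|μ| < 1`, then for the one-sided derivative `w` of `f` at `z`
in the tangent direction `τ = i·(z−z₀)/|z−z₀|` one has
`|w|²/|J| = |1 − (conj(z−z₀)/(z−z₀))·μ|² / (1 − |μ|²)`. -/
theorem tangent_dilatation_formula (D : Set ℂ) (hD : IsOpen D) (f : ℂ → ℂ)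
    (z z₀ : ℂ) (hz : z ∈ D) (hz₀ : z₀ ≠ z) (L : ℂ →L[ℝ] ℂ)
    (hf : HasFDerivAt f L z)
    (fz fzbar : ℂ)
    (hfz : fz = (L 1 - Complex.I * L Complex.I) / 2)
    (hfzbar : fzbar = (L 1 + Complex.I * L Complex.I) / 2)
    (hJ : ‖fz‖ ^ 2 - ‖fzbar‖ ^ 2 ≠ 0)
    (μ : ℂ) (hμdef : μ = fzbar / fz) (hμ : ‖μ‖ < 1)
    (w : ℂ)
    (hw : Tendsto
      (fun t : ℝ =>
        (f (z + (t : ℂ) * (Complex.I * ((z - z₀) / ((‖z - z₀‖ : ℝ) : ℂ)))) - f z)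
          / (t : ℂ))
      (𝓝[>] (0 : ℝ)) (𝓝 w)) :
    ‖w‖ ^ 2 / |‖fz‖ ^ 2 - ‖fzbar‖ ^ 2| =
      ‖1 - ((starRingEnd ℂ) (z - z₀) / (z - z₀)) * μ‖ ^ 2 /
        (1 - (‖μ‖) ^ 2) := by
  have hzz : z - z₀ ≠ 0 := sub_ne_zero.mpr (Ne.symm hz₀)
  set r : ℝ := ‖z - z₀‖ with hr_def
  have hr : 0 < r := norm_pos_iff.mpr hzz
  have hrC : (r : ℂ) ≠ 0 := by exact_mod_cast hr.ne'
  set τ : ℂ := Complex.I * ((z - z₀) / (r : ℂ)) with hτ_def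
  clear_value r τ
  have hτabs : ‖τ‖ = 1 := by
    rw [hτ_def]
    simp [norm_div, abs_of_pos hr, ← hr_def, div_self hr.ne']
  have hτc : (starRingEnd ℂ) τ = -Complex.I * ((starRingEnd ℂ) (z - z₀) / (r : ℂ)) := by
    rw [hτ_def]
    simp [map_div₀, Complex.conj_ofReal]
  -- w = L τ
  have hline : HasDerivAt (fun t : ℝ => f (z + (t : ℂ) * τ)) (L τ) 0 := by
    have h1 : HasDerivAt (fun t : ℝ => z + (t : ℂ) * τ) τ 0 := by
      simpa using ((hasDerivAt_id (0:ℝ)).ofReal_comp.mul_const τ).const_add z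
    have h2 : HasFDerivAt f L (z + (0:ℝ) * τ) := by simpa using hf
    exact h2.comp_hasDerivAt (0:ℝ) h1
  have hwL : w = L τ := by
    have hs := hline.tendsto_slope_zero_right
    have h3 : Tendsto
        (fun t : ℝ =>
          (f (z + (t : ℂ) * τ) - f z) / (t : ℂ)) (𝓝[>] (0:ℝ)) (𝓝 (L τ)) := by
      refine hs.congr fun t => ?_
      simp [div_eq_inv_mul, Complex.ofReal_inv, smul_eq_mul, Complex.real_smul]
    exact tendsto_nhds_unique hw h3
  -- L τ = fz * τ + fzbar * conj τ
  have hLτ : L τ = fz * τ + fzbar * (starRingEnd ℂ) τ := by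
    set a := L 1 with ha
    set b := L Complex.I with hb
    set x := τ.re with hx
    set y := τ.im with hy
    have hxy : τ = (x:ℂ) + (y:ℂ) * Complex.I := (Complex.re_add_im τ).symm
    have h1 : L τ = (x:ℂ) * a + (y:ℂ) * b := by
      conv_lhs => rw [hxy]
      have h0 : ((x:ℂ) + (y:ℂ) * Complex.I) = x • (1:ℂ) + y • Complex.I := by
        simp [Complex.real_smul]
      rw [h0, map_add, map_smul, map_smul]
      simp [Complex.real_smul]
      rfl
    have hcτ : (starRingEnd ℂ) τ = (x:ℂ) - (y:ℂ) * Complex.I := by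
      rw [hxy]; simp [Complex.conj_ofReal]; ring
    rw [h1, hfz, hfzbar, hcτ, hxy]
    linear_combination ((y:ℂ) * b) * Complex.I_sq
  by_cases hfz0 : fz = 0
  · -- degenerate case
    have hμ0 : μ = 0 := by simp [hμdef, hfz0]
    have hfzb : fzbar ≠ 0 := by
      intro h; apply hJ; simp [hfz0, h]
    have hwv : w = fzbar * (starRingEnd ℂ) τ := by rw [hwL, hLτ, hfz0]; ring
    have habsw : ‖w‖ = ‖fzbar‖ := by
      rw [hwv]; simp [hτabs]
    have habsJ : |‖fz‖ ^ 2 - ‖fzbar‖ ^ 2| =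
        ‖fzbar‖ ^ 2 := by
      rw [hfz0]
      simp [abs_of_nonneg (sq_nonneg ‖fzbar‖)]
    rw [habsw, hμ0, habsJ]
    simp [div_self (pow_ne_zero 2 (norm_ne_zero_iff.mpr hfzb))]
  · -- main case
    set q : ℂ := (starRingEnd ℂ) (z - z₀) / (z - z₀) with hq_def
    have hwv : w = fz * τ * (1 - q * μ) := by
      rw [hwL, hLτ, hμdef, hq_def, hτc, hτ_def]
      field_simp
      ring
    have habsw : ‖w‖ = ‖fz‖ * ‖1 - q * μ‖ := by
      rw [hwv]; simp [map_mul, hτabs]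
    have hμabs : ‖μ‖ = ‖fzbar‖ / ‖fz‖ := by
      rw [hμdef, norm_div]
    have hfza : (0:ℝ) < ‖fz‖ := norm_pos_iff.mpr hfz0
    have hlt : ‖fzbar‖ < ‖fz‖ := by
      have h4 := hμ
      rw [hμabs, div_lt_one hfza] at h4
      exact h4
    have hJpos : (0:ℝ) < ‖fz‖ ^ 2 - ‖fzbar‖ ^ 2 := by
      have := sq_lt_sq' (by linarith [norm_nonneg fzbar]) hlt
      linarith
    rw [abs_of_pos hJpos, habsw, hμabs]
    rw [mul_pow, div_pow]
    field_simp
end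

section
/- Let D ⊆ ℂ be a domain, z₀ ∈ D, and φ : D → ℝ a function that is integrable on some disk B(z₀, ε₀) ⊆ D. If there is a collection of real numbers φ_ε, ε ∈ (0, ε₀], such that limsup_{ε→0} ⨍_{B(z₀,ε)} |φ(z) − φ_ε| dm(z) < ∞, then φ has finite mean oscillation at z₀. -/
open MeasureTheory Filter Topology

/-- `φ` has finite mean oscillation at `z₀` relative to the domain `D`: it is integrable
on some disk `B(z₀, ε₀) ⊆ D` and
`limsup_{ε→0} ⨍_{B(z₀,ε)} |φ − φ̃_ε(z₀)| dm < ∞`, where `φ̃_ε(z₀)` is the mean of `φ`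
over `B(z₀, ε)` (the limsup condition is expressed as an eventual bound). -/
def HasFiniteMeanOscillationAt (D : Set ℂ) (φ : ℂ → ℝ) (z₀ : ℂ) : Prop :=
  ∃ ε₀ > (0 : ℝ), Metric.ball z₀ ε₀ ⊆ D ∧ IntegrableOn φ (Metric.ball z₀ ε₀) ∧
    ∃ C : ℝ, ∀ᶠ ε in 𝓝[>] (0 : ℝ),
      (⨍ w in Metric.ball z₀ ε, |φ w - ⨍ u in Metric.ball z₀ ε, φ u|) ≤ C

/-- If `φ` is integrable on some disk `B(z₀, ε₀) ⊆ D` and there is a collection of numbers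
`φ_ε`, `ε ∈ (0, ε₀]`, with `limsup_{ε→0} ⨍_{B(z₀,ε)} |φ − φ_ε| dm < ∞`, then `φ` has
finite mean oscillation at `z₀`. -/
theorem fmo_of_approximating_family (D : Set ℂ) (hD : IsOpen D) (hDconn : IsConnected D)
    (z₀ : ℂ) (hz₀ : z₀ ∈ D) (φ : ℂ → ℝ)
    (ε₀ : ℝ) (hε₀ : 0 < ε₀) (hball : Metric.ball z₀ ε₀ ⊆ D)
    (hint : IntegrableOn φ (Metric.ball z₀ ε₀))
    (φε : ℝ → ℝ) (C : ℝ)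
    (hC : ∀ᶠ ε in 𝓝[>] (0 : ℝ), (⨍ w in Metric.ball z₀ ε, |φ w - φε ε|) ≤ C) :
    HasFiniteMeanOscillationAt D φ z₀ := by
  refine ⟨ε₀, hε₀, hball, hint, 2 * C, ?_⟩
  have hmem : Set.Ioo (0:ℝ) ε₀ ∈ 𝓝[>] (0:ℝ) := Ioo_mem_nhdsGT hε₀
  filter_upwards [hC, hmem] with ε hε hεmem
  obtain ⟨hε0, hεlt⟩ := hεmem
  set B := Metric.ball z₀ ε with hB
  have hBsub : B ⊆ Metric.ball z₀ ε₀ := Metric.ball_subset_ball hεlt.le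
  have hintB : IntegrableOn φ B := hint.mono_set hBsub
  have hμpos : 0 < (volume B).toReal := by
    refine ENNReal.toReal_pos (Metric.measure_ball_pos _ _ hε0).ne' measure_ball_lt_top.ne
  set a : ℝ := ((volume B).toReal)⁻¹ with ha
  have hapos : 0 < a := inv_pos.2 hμpos
  have hmul : a * (volume B).toReal = 1 := inv_mul_cancel₀ hμpos.ne'
  set c := φε ε with hc
  set μm : ℝ := ⨍ u in B, φ u with hm
  have hconst : IntegrableOn (fun _ : ℂ => c) B :=
    integrableOn_const measure_ball_lt_top.ne
  have hsub : IntegrableOn (fun w => φ w - c) B := hintB.sub hconst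
  have hIconst : ∫ _ in B, c = (volume B).toReal * c := by
    rw [setIntegral_const, measureReal_def, smul_eq_mul]
  -- |m - c| ≤ a * ∫ |φ - c|
  have hmc : |μm - c| ≤ a * ∫ w in B, |φ w - c| := by
    have h1 : μm - c = a * ∫ w in B, (φ w - c) := by
      rw [hm, average_eq, measureReal_restrict_apply_univ, measureReal_def, integral_sub hintB hconst, hIconst]
      rw [ha, smul_eq_mul]
      field_simp
    have habs : |∫ w in B, (φ w - c)| ≤ ∫ w in B, |φ w - c| := by
      simpa [Real.norm_eq_abs] using
        norm_integral_le_integral_norm (μ := volume.restrict B) (fun w => φ w - c)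
    rw [h1, abs_mul, abs_of_pos hapos]
    exact mul_le_mul_of_nonneg_left habs hapos.le
  have hCpos : a * ∫ w in B, |φ w - c| ≤ C := by
    have := hε
    rwa [average_eq, measureReal_restrict_apply_univ, measureReal_def, smul_eq_mul] at this
  have hintabs1 : IntegrableOn (fun w => |φ w - μm|) B :=
    (hintB.sub (integrableOn_const measure_ball_lt_top.ne)).abs
  have hintabs2 : IntegrableOn (fun w => |φ w - c| + |c - μm|) B :=
    hsub.abs.add (integrableOn_const measure_ball_lt_top.ne)
  have hptwise : ∀ w, |φ w - μm| ≤ |φ w - c| + |c - μm| := by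
    intro w
    calc |φ w - μm| = |(φ w - c) + (c - μm)| := by ring_nf
    _ ≤ |φ w - c| + |c - μm| := abs_add_le _ _
  have hIle : ∫ w in B, |φ w - μm| ≤ ∫ w in B, (|φ w - c| + |c - μm|) :=
    setIntegral_mono_on hintabs1 hintabs2 measurableSet_ball fun w _ => hptwise w
  have hIsum : ∫ w in B, (|φ w - c| + |c - μm|) =
      (∫ w in B, |φ w - c|) + (volume B).toReal * |c - μm| := by
    rw [integral_add hsub.abs (integrableOn_const measure_ball_lt_top.ne),
      setIntegral_const, measureReal_def, smul_eq_mul]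
  rw [average_eq, measureReal_restrict_apply_univ, measureReal_def, smul_eq_mul]
  calc a * ∫ w in B, |φ w - μm| ≤ a * ((∫ w in B, |φ w - c|) + (volume B).toReal * |c - μm|) := by
        refine mul_le_mul_of_nonneg_left ?_ hapos.le
        rw [← hIsum]; exact hIle
    _ = a * (∫ w in B, |φ w - c|) + |c - μm| := by
        rw [mul_add, ← mul_assoc, hmul, one_mul]
    _ ≤ C + C := by
        refine add_le_add hCpos ?_
        rw [abs_sub_comm]
        exact hmc.trans hCpos
    _ = 2 * C := by ring
end

section
/- Let D be a domain in ℂ, z₀ ∈ D, and let φ : D → ℝ be a non-negative function of finite mean oscillation at z₀. Then there exists ε₀ ∈ (0, δ₀), where δ₀ = min(e^{−e}, d₀) and d₀ = sup_{z∈D} |z − z₀|, such that ∫_{ε<|z−z₀|<ε₀} φ(z) / (|z − z₀| · log(1/|z − z₀|))² dm(z) = O(log log (1/ε)) as ε → 0; that is, there are constants C > 0 and ε₁ ∈ (0, ε₀) such that the integral is at most C · log log (1/ε) for all ε ∈ (0, ε₁). -/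
open MeasureTheory Filter Topology

set_option maxHeartbeats 1000000

lemma ball_vol_toReal (z₀ : ℂ) (r : ℝ) (hr : 0 ≤ r) :
    (volume (Metric.ball z₀ r)).toReal = r ^ 2 * Real.pi := by
  rw [Complex.volume_ball]
  rw [ENNReal.toReal_mul, ENNReal.toReal_pow, ENNReal.toReal_ofReal hr]
  simp [NNReal.coe_real_pi]

lemma intconst (z₀ : ℂ) (r c : ℝ) : IntegrableOn (fun _ : ℂ => c) (Metric.ball z₀ r) :=
  integrableOn_const measure_ball_lt_top.ne

lemma avg_half_le (φ : ℂ → ℝ) (z₀ : ℂ) (ε : ℝ) (hε : 0 < ε)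
    (hint : IntegrableOn φ (Metric.ball z₀ ε)) :
    (⨍ w in Metric.ball z₀ (ε/2), φ w) ≤ (⨍ w in Metric.ball z₀ ε, φ w)
      + 4 * ⨍ w in Metric.ball z₀ ε, |φ w - ⨍ u in Metric.ball z₀ ε, φ u| := by
  have hVb : (volume (Metric.ball z₀ (ε/2))).toReal = (ε/2) ^ 2 * Real.pi :=
    ball_vol_toReal z₀ _ (by linarith)
  have hVB : (volume (Metric.ball z₀ ε)).toReal = ε ^ 2 * Real.pi := ball_vol_toReal z₀ _ hε.le
  have hVbpos : 0 < (volume (Metric.ball z₀ (ε/2))).toReal := by rw [hVb]; positivity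
  have hVBpos : 0 < (volume (Metric.ball z₀ ε)).toReal := by rw [hVB]; positivity
  set c := ⨍ w in Metric.ball z₀ ε, φ w with hc
  set B := Metric.ball z₀ ε with hB
  set b := Metric.ball z₀ (ε/2) with hb
  have hbB : b ⊆ B := Metric.ball_subset_ball (by linarith)
  have hintb : IntegrableOn φ b := hint.mono_set hbB
  have hintc : IntegrableOn (fun w => φ w - c) b := hintb.sub (intconst z₀ _ c)
  have hintB : IntegrableOn (fun w => |φ w - c|) B := (hint.sub (intconst z₀ _ c)).abs
  have h1 : ∫ w in b, φ w ≤ c * (volume b).toReal + ∫ w in B, |φ w - c| := by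
    have e1 : ∫ w in b, φ w = (∫ w in b, (φ w - c)) + c * (volume b).toReal := by
      rw [MeasureTheory.integral_sub hintb (intconst z₀ _ c), MeasureTheory.setIntegral_const,
        smul_eq_mul, measureReal_def]
      ring
    rw [e1]
    have h2 : (∫ w in b, (φ w - c)) ≤ ∫ w in b, |φ w - c| :=
      integral_mono hintc hintc.abs (fun w => le_abs_self _)
    have h3 : (∫ w in b, |φ w - c|) ≤ ∫ w in B, |φ w - c| := by
      apply setIntegral_mono_set hintB (Eventually.of_forall fun w => abs_nonneg _)
      exact HasSubset.Subset.eventuallyLE hbB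
    linarith
  have hcB : c = (volume B).toReal⁻¹ * ∫ w in B, φ w := by
    rw [hc, setAverage_eq, smul_eq_mul, measureReal_def]
  have hratio : (volume B).toReal = 4 * (volume b).toReal := by rw [hVb, hVB]; ring
  rw [setAverage_eq, setAverage_eq, smul_eq_mul, smul_eq_mul, measureReal_def, measureReal_def, inv_mul_le_iff₀ hVbpos]
  calc ∫ w in b, φ w ≤ c * (volume b).toReal + ∫ w in B, |φ w - c| := h1
    _ = (c + 4 * ((volume B).toReal⁻¹ * ∫ w in B, |φ w - c|)) * (volume b).toReal := by
        rw [hratio]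
        field_simp
    _ = (volume b).toReal * (c + 4 * ((volume B).toReal⁻¹ * ∫ w in B, |φ w - c|)) := mul_comm _ _

lemma avg_iter (φ : ℂ → ℝ) (z₀ : ℂ) (ε₀ : ℝ) (hε₀ : 0 < ε₀)
    (hint : IntegrableOn φ (Metric.ball z₀ ε₀)) (C₀ : ℝ)
    (hosc : ∀ r : ℝ, 0 < r → r ≤ ε₀ →
      (⨍ w in Metric.ball z₀ r, |φ w - ⨍ u in Metric.ball z₀ r, φ u|) ≤ C₀) :
    ∀ k : ℕ, (⨍ w in Metric.ball z₀ (ε₀ / 2 ^ k), φ w) ≤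
      (⨍ w in Metric.ball z₀ ε₀, φ w) + 4 * C₀ * k := by
  intro k
  induction k with
  | zero => simp
  | succ k ih =>
    have hrpos : (0:ℝ) < ε₀ / 2 ^ k := by positivity
    have hrle : ε₀ / 2 ^ k ≤ ε₀ := by
      rw [div_le_iff₀ (by positivity)]
      nlinarith [one_le_pow₀ (n := k) (one_le_two (α := ℝ))]
    have hint' : IntegrableOn φ (Metric.ball z₀ (ε₀ / 2 ^ k)) :=
      hint.mono_set (Metric.ball_subset_ball hrle)
    have h := avg_half_le φ z₀ (ε₀ / 2 ^ k) hrpos hint'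
    have heq : ε₀ / 2 ^ k / 2 = ε₀ / 2 ^ (k + 1) := by ring
    rw [heq] at h
    have := hosc (ε₀ / 2 ^ k) hrpos hrle
    push_cast
    linarith

lemma lint_closedBall (φ : ℂ → ℝ) (z₀ : ℂ) (r : ℝ) (hr : 0 < r)
    (hint : IntegrableOn φ (Metric.ball z₀ r))
    (hnn : ∀ z ∈ Metric.ball z₀ r, 0 ≤ φ z) :
    ∫⁻ z in Metric.closedBall z₀ r, ENNReal.ofReal (φ z) ≤
      ENNReal.ofReal ((⨍ w in Metric.ball z₀ r, φ w) * (r ^ 2 * Real.pi)) := by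
  have hsphere : volume (Metric.sphere z₀ r) = 0 := Measure.addHaar_sphere volume z₀ r
  have hsub : Metric.closedBall z₀ r ⊆ Metric.ball z₀ r ∪ Metric.sphere z₀ r := by
    intro z hz
    rcases lt_or_eq_of_le (Metric.mem_closedBall.1 hz) with h | h
    · exact Or.inl h
    · exact Or.inr h
  calc ∫⁻ z in Metric.closedBall z₀ r, ENNReal.ofReal (φ z)
      ≤ ∫⁻ z in Metric.ball z₀ r ∪ Metric.sphere z₀ r, ENNReal.ofReal (φ z) :=
        lintegral_mono_set hsub
    _ ≤ (∫⁻ z in Metric.ball z₀ r, ENNReal.ofReal (φ z)) +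
        ∫⁻ z in Metric.sphere z₀ r, ENNReal.ofReal (φ z) := lintegral_union_le _ _ _
    _ = ∫⁻ z in Metric.ball z₀ r, ENNReal.ofReal (φ z) := by
        rw [setLIntegral_measure_zero _ _ hsphere, add_zero]
    _ ≤ ENNReal.ofReal ((⨍ w in Metric.ball z₀ r, φ w) * (r ^ 2 * Real.pi)) := by
        rw [← ofReal_integral_eq_lintegral_ofReal hint
          ((ae_restrict_iff' measurableSet_ball).2 (ae_of_all _ hnn))]
        apply ENNReal.ofReal_le_ofReal
        have hV : (volume (Metric.ball z₀ r)).toReal = r ^ 2 * Real.pi :=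
          ball_vol_toReal z₀ r hr.le
        rw [setAverage_eq, smul_eq_mul, measureReal_def, hV]
        rw [inv_mul_eq_div, div_mul_cancel₀]
        positivity

lemma avg_nonneg_ball (φ : ℂ → ℝ) (z₀ : ℂ) (r : ℝ)
    (hnn : ∀ z ∈ Metric.ball z₀ r, 0 ≤ φ z) :
    0 ≤ ⨍ w in Metric.ball z₀ r, φ w := by
  rw [setAverage_eq, smul_eq_mul]
  apply mul_nonneg (by positivity)
  exact setIntegral_nonneg measurableSet_ball hnn

lemma annulus_piece (D : Set ℂ) (φ : ℂ → ℝ) (z₀ : ℂ) (ε₀ ε₂ M : ℝ)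
    (hε₀ : 0 < ε₀) (hε₀₂ : ε₀ < ε₂) (hhalf : ε₀ ≤ 1/2)
    (hball : Metric.ball z₀ ε₂ ⊆ D)
    (hnn : ∀ z ∈ D, 0 ≤ φ z)
    (hint : IntegrableOn φ (Metric.ball z₀ ε₂))
    (hM : 0 ≤ M) (k : ℕ)
    (hψ : (⨍ w in Metric.ball z₀ (ε₀ / 2 ^ k), φ w) ≤ M * (k + 1)) :
    ∫⁻ z in (Metric.closedBall z₀ (ε₀ / 2 ^ k) \ Metric.closedBall z₀ (ε₀ / 2 ^ (k + 1))) ∩ D,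
        ENNReal.ofReal (φ z / (dist z z₀ * Real.log (1 / dist z z₀)) ^ 2)
      ≤ ENNReal.ofReal ((4 * Real.pi * M / Real.log 2 ^ 2) / (k + 1)) := by
  have htpos : (0:ℝ) < 2 ^ k := by positivity
  have hone_le : (1:ℝ) ≤ 2 ^ k := one_le_pow₀ one_le_two
  set r' : ℝ := ε₀ / 2 ^ k with hr'
  have hr'pos : 0 < r' := by positivity
  have hr'le : r' ≤ ε₀ := by rw [hr', div_le_iff₀ htpos]; nlinarith
  have hr'lt₂ : r' < ε₂ := lt_of_le_of_lt hr'le hε₀₂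
  set a : ℝ := ε₀ / 2 ^ (k + 1) with ha
  have hapos : 0 < a := by positivity
  set b : ℝ := a * ((k + 1) * Real.log 2) with hb
  have hlog2 : 0 < Real.log 2 := Real.log_pos one_lt_two
  have hk1 : (0:ℝ) < k + 1 := by positivity
  have hbpos : 0 < b := by positivity
  set S : Set ℂ :=
    (Metric.closedBall z₀ r' \ Metric.closedBall z₀ a) ∩ D with hS
  have hSsub : S ⊆ Metric.ball z₀ ε₂ := fun z hz => by
    have := hz.1.1
    exact Metric.mem_ball.2 (lt_of_le_of_lt (Metric.mem_closedBall.1 this) hr'lt₂)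
  have hφae : AEMeasurable φ (volume.restrict S) :=
    (hint.aemeasurable).mono_measure (Measure.restrict_mono hSsub le_rfl)
  -- pointwise bound on S
  have hpt : ∀ z ∈ S, ENNReal.ofReal (φ z / (dist z z₀ * Real.log (1 / dist z z₀)) ^ 2)
      ≤ ENNReal.ofReal (φ z) * ENNReal.ofReal (1 / b ^ 2) := by
    intro z hz
    have hzD : z ∈ D := hz.2
    have hφz : 0 ≤ φ z := hnn z hzD
    set r := dist z z₀ with hr
    have hra : a < r := by
      by_contra h
      exact hz.1.2 (Metric.mem_closedBall.2 (not_lt.1 h))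
    have hrr' : r ≤ r' := Metric.mem_closedBall.1 hz.1.1
    have hrpos : 0 < r := lt_trans hapos hra
    have hlogr : (k + 1) * Real.log 2 ≤ Real.log (1 / r) := by
      rw [one_div, Real.log_inv]
      have h1 : Real.log r ≤ Real.log r' := Real.log_le_log hrpos hrr'
      have h2 : Real.log r' = Real.log ε₀ - k * Real.log 2 := by
        rw [hr', Real.log_div hε₀.ne' (by positivity), Real.log_pow]
      have h3 : Real.log ε₀ ≤ -Real.log 2 := by
        have := Real.log_le_log hε₀ hhalf
        rwa [show (1:ℝ)/2 = 2⁻¹ by norm_num, Real.log_inv] at this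
      rw [h2] at h1
      linarith
    have hblr : b ≤ r * Real.log (1 / r) := by
      rw [hb]
      apply mul_le_mul hra.le hlogr (by positivity) hrpos.le
    have hsq : b ^ 2 ≤ (r * Real.log (1 / r)) ^ 2 := by
      apply pow_le_pow_left₀ hbpos.le hblr
    have hdiv : φ z / (r * Real.log (1 / r)) ^ 2 ≤ φ z / b ^ 2 :=
      div_le_div_of_nonneg_left hφz (by positivity) hsq
    calc ENNReal.ofReal (φ z / (r * Real.log (1 / r)) ^ 2)
        ≤ ENNReal.ofReal (φ z / b ^ 2) := ENNReal.ofReal_le_ofReal hdiv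
      _ = ENNReal.ofReal (φ z) * ENNReal.ofReal (1 / b ^ 2) := by
          rw [← ENNReal.ofReal_mul hφz]; ring_nf
  calc ∫⁻ z in S, ENNReal.ofReal (φ z / (dist z z₀ * Real.log (1 / dist z z₀)) ^ 2)
      ≤ ∫⁻ z in S, ENNReal.ofReal (φ z) * ENNReal.ofReal (1 / b ^ 2) := by
        apply setLIntegral_mono_ae
          ((ENNReal.measurable_ofReal.comp_aemeasurable hφae).mul_const _)
          (ae_of_all _ hpt)
    _ = (∫⁻ z in S, ENNReal.ofReal (φ z)) * ENNReal.ofReal (1 / b ^ 2) :=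
        lintegral_mul_const'' _ (ENNReal.measurable_ofReal.comp_aemeasurable hφae)
    _ ≤ (∫⁻ z in Metric.closedBall z₀ r', ENNReal.ofReal (φ z)) * ENNReal.ofReal (1 / b ^ 2) := by
        apply mul_le_mul_left
        exact lintegral_mono_set (fun z hz => hz.1.1)
    _ ≤ ENNReal.ofReal ((⨍ w in Metric.ball z₀ r', φ w) * (r' ^ 2 * Real.pi)) *
          ENNReal.ofReal (1 / b ^ 2) := by
        apply mul_le_mul_left
        exact lint_closedBall φ z₀ r' hr'pos
          (hint.mono_set (Metric.ball_subset_ball hr'lt₂.le))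
          (fun z hz => hnn z (hball (Metric.ball_subset_ball hr'lt₂.le hz)))
    _ ≤ ENNReal.ofReal ((4 * Real.pi * M / Real.log 2 ^ 2) / (k + 1)) := by
        have hψnn : 0 ≤ ⨍ w in Metric.ball z₀ r', φ w :=
          avg_nonneg_ball φ z₀ r' (fun z hz => hnn z (hball (Metric.ball_subset_ball hr'lt₂.le hz)))
        rw [← ENNReal.ofReal_mul (by positivity)]
        apply ENNReal.ofReal_le_ofReal
        have step1 : (⨍ w in Metric.ball z₀ r', φ w) * (r' ^ 2 * Real.pi) * (1 / b ^ 2)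
            ≤ (M * (k + 1)) * (r' ^ 2 * Real.pi) * (1 / b ^ 2) := by
          apply mul_le_mul_of_nonneg_right _ (by positivity)
          apply mul_le_mul_of_nonneg_right hψ (by positivity)
        refine le_trans step1 (le_of_eq ?_)
        rw [hb, ha, hr']
        have h2k1 : (2:ℝ) ^ (k+1) = 2 * 2 ^ k := by ring
        field_simp
        ring

lemma lintegral_biUnion_le (f : ℂ → ENNReal) (t : ℕ → Set ℂ) (s : Finset ℕ) :
    ∫⁻ z in ⋃ k ∈ s, t k, f z ≤ ∑ k ∈ s, ∫⁻ z in t k, f z := by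
  classical
  induction s using Finset.induction with
  | empty => simp
  | insert a s hnotmem ih =>
    rw [Finset.set_biUnion_insert, Finset.sum_insert hnotmem]
    exact le_trans (lintegral_union_le _ _ _) (add_le_add_right ih _)

lemma cover_annulus (z₀ : ℂ) (ε₀ ε : ℝ) (hε : 0 < ε) (hεε₀ : ε < ε₀) :
    {z : ℂ | ε < dist z z₀ ∧ dist z z₀ < ε₀} ⊆
      ⋃ k ∈ Finset.range (⌊Real.logb 2 (ε₀ / ε)⌋₊ + 1),
        (Metric.closedBall z₀ (ε₀ / 2 ^ k) \ Metric.closedBall z₀ (ε₀ / 2 ^ (k + 1))) := by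
  intro z hz
  obtain ⟨h1, h2⟩ := hz
  set r := dist z z₀ with hr
  have hrpos : 0 < r := lt_trans hε h1
  have hquot : 1 < ε₀ / r := (one_lt_div hrpos).2 h2
  set k := ⌊Real.logb 2 (ε₀ / r)⌋₊ with hk
  have hlb_nonneg : 0 ≤ Real.logb 2 (ε₀ / r) := Real.logb_nonneg one_lt_two hquot.le
  have hε₀pos : 0 < ε₀ := lt_trans hε hεε₀
  have hkN : k ≤ ⌊Real.logb 2 (ε₀ / ε)⌋₊ := by
    apply Nat.floor_mono
    apply (Real.logb_le_logb one_lt_two (div_pos hε₀pos hrpos) (div_pos hε₀pos hε)).2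
    apply div_le_div_of_nonneg_left hε₀pos.le hε h1.le
  have h2k : (2:ℝ) ^ k ≤ ε₀ / r := by
    have h1' : ((2:ℝ) ^ k : ℝ) = (2:ℝ) ^ (k:ℝ) := by
      rw [Real.rpow_natCast]
    rw [h1']
    calc (2:ℝ) ^ (k:ℝ) ≤ (2:ℝ) ^ Real.logb 2 (ε₀ / r) :=
          Real.rpow_le_rpow_of_exponent_le one_le_two (Nat.floor_le hlb_nonneg)
      _ = ε₀ / r := Real.rpow_logb two_pos (by norm_num) (by positivity)
  have h2k' : ε₀ / r < (2:ℝ) ^ (k + 1) := by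
    have h1' : ((2:ℝ) ^ (k+1) : ℝ) = (2:ℝ) ^ ((k:ℝ)+1) := by
      rw [← Real.rpow_natCast]; push_cast; ring_nf
    rw [h1']
    calc ε₀ / r = (2:ℝ) ^ Real.logb 2 (ε₀ / r) :=
          (Real.rpow_logb two_pos (by norm_num) (by positivity)).symm
      _ < (2:ℝ) ^ ((k:ℝ)+1) := by
          apply Real.rpow_lt_rpow_of_exponent_lt one_lt_two
          exact Nat.lt_floor_add_one _
  refine Set.mem_biUnion (Finset.mem_range.2 (Nat.lt_succ_of_le hkN)) ?_
  constructor
  · rw [Metric.mem_closedBall, ← hr, le_div_iff₀ (by positivity), mul_comm,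
      ← le_div_iff₀ hrpos]
    exact h2k
  · intro hmem
    have hmem' : dist z z₀ ≤ ε₀ / 2 ^ (k+1) := hmem
    rw [← hr] at hmem'
    have : ε₀ / 2 ^ (k+1) < r := by
      rw [div_lt_iff₀ (by positivity), mul_comm, ← div_lt_iff₀ hrpos]
      exact h2k'
    linarith

lemma sum_inv_le_log (n : ℕ) :
    ∑ k ∈ Finset.range n, (1:ℝ) / (k + 1) ≤ 1 + Real.log n := by
  have h := harmonic_le_one_add_log n
  have hcast : ((harmonic n : ℚ) : ℝ) = ∑ k ∈ Finset.range n, (1:ℝ) / (k + 1) := by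
    rw [harmonic]
    push_cast
    simp [one_div]
  rw [hcast] at h
  exact_mod_cast h

theorem fmo_annulus_estimate_aux (D : Set ℂ) (hD : IsOpen D) (hDconn : IsConnected D)
    (z₀ : ℂ) (hz₀ : z₀ ∈ D) (φ : ℂ → ℝ)
    (hnonneg : ∀ z ∈ D, 0 ≤ φ z)
    (hfmo : ∃ ε₀ > (0 : ℝ), Metric.ball z₀ ε₀ ⊆ D ∧ IntegrableOn φ (Metric.ball z₀ ε₀) ∧
      ∃ C : ℝ, ∀ᶠ ε in 𝓝[>] (0 : ℝ),
        (⨍ w in Metric.ball z₀ ε, |φ w - ⨍ u in Metric.ball z₀ ε, φ u|) ≤ C) :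
    ∃ ε₀ : ℝ, 0 < ε₀ ∧
      ENNReal.ofReal ε₀ <
        min (ENNReal.ofReal (Real.exp (-(Real.exp 1)))) (⨆ z ∈ D, edist z z₀) ∧
      ∃ C > (0 : ℝ), ∃ ε₁ ∈ Set.Ioo (0 : ℝ) ε₀, ∀ ε ∈ Set.Ioo (0 : ℝ) ε₁,
        (∫⁻ z in ({z : ℂ | ε < dist z z₀ ∧ dist z z₀ < ε₀} ∩ D),
            ENNReal.ofReal (φ z / (dist z z₀ * Real.log (1 / dist z z₀)) ^ 2)) ≤
          ENNReal.ofReal (C * Real.log (Real.log (1 / ε))) := by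
  obtain ⟨ε₂, hε₂pos, hsubD, hint, C₀, hev⟩ := hfmo
  rw [eventually_nhdsWithin_iff, Metric.eventually_nhds_iff] at hev
  obtain ⟨δ, hδpos, hδ⟩ := hev
  obtain ⟨ρ, hρpos, hρ⟩ := Metric.isOpen_iff.1 hD z₀ hz₀
  have hexp_pos : (0:ℝ) < Real.exp (-(Real.exp 1)) := Real.exp_pos _
  have hexp_le_half : Real.exp (-(Real.exp 1)) ≤ 1/2 := by
    have h1 : Real.exp (-(Real.exp 1)) ≤ Real.exp (-1) := by
      apply Real.exp_le_exp.2
      nlinarith [Real.add_one_le_exp (1:ℝ)]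
    have h2 : Real.exp (-1 : ℝ) ≤ 1/2 := by
      rw [Real.exp_neg]
      rw [inv_le_comm₀ (Real.exp_pos 1) (by norm_num)]
      nlinarith [Real.add_one_le_exp (1:ℝ)]
    linarith
  set ε₀ : ℝ := min (min ε₂ δ) (min (Real.exp (-(Real.exp 1))) ρ) / 2 with hε₀def
  have hε₀pos : 0 < ε₀ := by
    apply div_pos _ two_pos
    exact lt_min (lt_min hε₂pos hδpos) (lt_min hexp_pos hρpos)
  have hε₀ε₂ : ε₀ < ε₂ := by
    have h := le_trans (min_le_left (min ε₂ δ) (min (Real.exp (-(Real.exp 1))) ρ)) (min_le_left ε₂ δ)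
    rw [hε₀def]; linarith
  have hε₀δ : ε₀ < δ := by
    have h := le_trans (min_le_left (min ε₂ δ) (min (Real.exp (-(Real.exp 1))) ρ)) (min_le_right ε₂ δ)
    rw [hε₀def]; linarith
  have hε₀exp : ε₀ < Real.exp (-(Real.exp 1)) := by
    have h := le_trans (min_le_right (min ε₂ δ) (min (Real.exp (-(Real.exp 1))) ρ)) (min_le_left (Real.exp (-(Real.exp 1))) ρ)
    rw [hε₀def]; linarith
  have hε₀ρ : ε₀ ≤ ρ / 2 := by
    have h := le_trans (min_le_right (min ε₂ δ) (min (Real.exp (-(Real.exp 1))) ρ)) (min_le_right (Real.exp (-(Real.exp 1))) ρ)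
    rw [hε₀def]; linarith
  have hε₀half : ε₀ ≤ 1/2 := by linarith
  refine ⟨ε₀, hε₀pos, ?_, ?_⟩
  · -- smallness condition
    apply lt_min
    · exact (ENNReal.ofReal_lt_ofReal_iff hexp_pos).2 hε₀exp
    · have hzmem : z₀ + (↑(3 * ρ / 4) : ℂ) ∈ D := by
        apply hρ
        rw [Metric.mem_ball]
        simp only [dist_self_add_left]
        rw [Complex.norm_real, Real.norm_eq_abs]
        rw [abs_of_pos (by linarith)]
        linarith
      have hd : edist (z₀ + (↑(3 * ρ / 4) : ℂ)) z₀ = ENNReal.ofReal (3 * ρ / 4) := by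
        rw [edist_dist]
        congr 1
        simp only [dist_self_add_left]
        rw [Complex.norm_real, Real.norm_eq_abs, abs_of_pos (by linarith)]
      calc ENNReal.ofReal ε₀ < ENNReal.ofReal (3 * ρ / 4) := by
            apply (ENNReal.ofReal_lt_ofReal_iff (by linarith)).2
            linarith
        _ = edist (z₀ + (↑(3 * ρ / 4) : ℂ)) z₀ := hd.symm
        _ ≤ ⨆ z ∈ D, edist z z₀ := le_iSup₂_of_le _ hzmem le_rfl
  -- main estimate
  have hosc : ∀ r : ℝ, 0 < r → r ≤ ε₀ →
      (⨍ w in Metric.ball z₀ r, |φ w - ⨍ u in Metric.ball z₀ r, φ u|) ≤ C₀ := by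
    intro r hr hrle
    apply hδ
    · rw [Real.dist_eq, sub_zero, abs_of_pos hr]; linarith
    · exact hr
  set C₀' := max C₀ 0 with hC₀'
  set ψ₀ := ⨍ w in Metric.ball z₀ ε₀, φ w with hψ₀
  have hψ₀nn : 0 ≤ ψ₀ :=
    avg_nonneg_ball φ z₀ ε₀ (fun z hz =>
      hnonneg z (hsubD (Metric.ball_subset_ball hε₀ε₂.le hz)))
  set M := ψ₀ + 4 * C₀' + 1 with hM
  have hMpos : 0 < M := by
    have : (0:ℝ) ≤ C₀' := le_max_right _ _
    rw [hM]; linarith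
  have hψk : ∀ k : ℕ, (⨍ w in Metric.ball z₀ (ε₀ / 2 ^ k), φ w) ≤ M * (k + 1) := by
    intro k
    have h1 := avg_iter φ z₀ ε₀ hε₀pos (hint.mono_set (Metric.ball_subset_ball hε₀ε₂.le))
      C₀ hosc k
    have hC₀le : C₀ ≤ C₀' := le_max_left _ _
    have hknn : (0:ℝ) ≤ k := Nat.cast_nonneg k
    have hC₀'nn : (0:ℝ) ≤ C₀' := le_max_right _ _
    rw [hM]
    nlinarith
  set K := 4 * Real.pi * M / Real.log 2 ^ 2 with hK
  have hlog2 : 0 < Real.log 2 := Real.log_pos one_lt_two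
  have hKpos : 0 < K := by rw [hK]; positivity
  refine ⟨4 * K, by positivity, ε₀ / 2, ⟨by positivity, by linarith⟩, ?_⟩
  intro ε hε
  obtain ⟨hεpos, hεlt⟩ := hε
  have hεε₀ : ε < ε₀ := by linarith
  set N := ⌊Real.logb 2 (ε₀ / ε)⌋₊ with hN
  -- covering and summing
  have hcover : ({z : ℂ | ε < dist z z₀ ∧ dist z z₀ < ε₀} ∩ D) ⊆
      ⋃ k ∈ Finset.range (N + 1),
        ((Metric.closedBall z₀ (ε₀ / 2 ^ k) \ Metric.closedBall z₀ (ε₀ / 2 ^ (k + 1))) ∩ D) := by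
    intro z hz
    have h1 := cover_annulus z₀ ε₀ ε hεpos hεε₀ hz.1
    rw [Set.mem_iUnion₂] at h1 ⊢
    obtain ⟨k, hk, hmem⟩ := h1
    exact ⟨k, hk, hmem, hz.2⟩
  calc (∫⁻ z in ({z : ℂ | ε < dist z z₀ ∧ dist z z₀ < ε₀} ∩ D),
          ENNReal.ofReal (φ z / (dist z z₀ * Real.log (1 / dist z z₀)) ^ 2))
      ≤ ∫⁻ z in ⋃ k ∈ Finset.range (N + 1),
          ((Metric.closedBall z₀ (ε₀ / 2 ^ k) \ Metric.closedBall z₀ (ε₀ / 2 ^ (k + 1))) ∩ D),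
          ENNReal.ofReal (φ z / (dist z z₀ * Real.log (1 / dist z z₀)) ^ 2) :=
        lintegral_mono_set hcover
    _ ≤ ∑ k ∈ Finset.range (N + 1), ∫⁻ z in
          ((Metric.closedBall z₀ (ε₀ / 2 ^ k) \ Metric.closedBall z₀ (ε₀ / 2 ^ (k + 1))) ∩ D),
          ENNReal.ofReal (φ z / (dist z z₀ * Real.log (1 / dist z z₀)) ^ 2) :=
        lintegral_biUnion_le _ _ _
    _ ≤ ∑ k ∈ Finset.range (N + 1), ENNReal.ofReal (K / (k + 1)) := by
        apply Finset.sum_le_sum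
        intro k _
        exact annulus_piece D φ z₀ ε₀ ε₂ M hε₀pos hε₀ε₂ hε₀half hsubD hnonneg hint
          hMpos.le k (hψk k)
    _ = ENNReal.ofReal (∑ k ∈ Finset.range (N + 1), K / (k + 1)) := by
        rw [ENNReal.ofReal_sum_of_nonneg]
        intro k _
        positivity
    _ ≤ ENNReal.ofReal (4 * K * Real.log (Real.log (1 / ε))) := by
        apply ENNReal.ofReal_le_ofReal
        -- sum of K/(k+1) = K * sum
        have hsum : ∑ k ∈ Finset.range (N + 1), K / (k + 1) =
            K * ∑ k ∈ Finset.range (N + 1), (1:ℝ) / (k + 1) := by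
          rw [Finset.mul_sum]
          apply Finset.sum_congr rfl
          intro k _
          ring
        rw [hsum]
        have hharm := sum_inv_le_log (N + 1)
        set L := Real.log (1 / ε) with hL
        have hLe : Real.exp 1 < L := by
          rw [hL]
          have h1 : Real.exp (Real.exp 1) < 1 / ε := by
            rw [lt_div_iff₀ hεpos]
            have : ε < Real.exp (-(Real.exp 1)) := by linarith
            calc Real.exp (Real.exp 1) * ε < Real.exp (Real.exp 1) *
                  Real.exp (-(Real.exp 1)) := by
                  apply mul_lt_mul_of_pos_left this (Real.exp_pos _)
              _ = 1 := by rw [← Real.exp_add]; simp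
          calc Real.exp 1 = Real.log (Real.exp (Real.exp 1)) := (Real.log_exp _).symm
            _ < L := Real.log_lt_log (Real.exp_pos _) h1
        have hL1 : 1 < L := lt_trans (by nlinarith [Real.add_one_le_exp (1:ℝ)]) hLe
        have hlogL : 1 < Real.log L := by
          calc (1:ℝ) = Real.log (Real.exp 1) := (Real.log_exp 1).symm
            _ < Real.log L := Real.log_lt_log (Real.exp_pos 1) hLe
        -- N + 1 ≤ 3 L
        have hN3L : (N:ℝ) + 1 ≤ 3 * L := by
          have h1 : (N:ℝ) ≤ Real.logb 2 (ε₀ / ε) := by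
            apply Nat.floor_le
            apply Real.logb_nonneg one_lt_two
            rw [le_div_iff₀ hεpos]
            linarith
          have hlogle : Real.log (ε₀ / ε) ≤ L := by
            rw [hL]
            apply Real.log_le_log (by positivity)
            gcongr
            linarith
          have h2 : Real.logb 2 (ε₀ / ε) ≤ L / Real.log 2 := by
            rw [Real.logb]
            gcongr
          have hN2 : (N:ℝ) * Real.log 2 ≤ L :=
            (le_div_iff₀ hlog2).1 (le_trans h1 h2)
          nlinarith [Real.log_two_gt_d9]
        have hlogN : Real.log ((N:ℝ) + 1) ≤ 2 + Real.log L := by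
          calc Real.log ((N:ℝ) + 1) ≤ Real.log (3 * L) := by
                apply Real.log_le_log (by positivity) hN3L
            _ = Real.log 3 + Real.log L := Real.log_mul (by norm_num) (by linarith)
            _ ≤ 2 + Real.log L := by
                have := Real.log_le_sub_one_of_pos (show (0:ℝ) < 3 by norm_num)
                linarith
        have : ∑ k ∈ Finset.range (N + 1), (1:ℝ) / (k + 1) ≤ 4 * Real.log L := by
          have := hharm
          push_cast at this
          linarith
        calc K * ∑ k ∈ Finset.range (N + 1), (1:ℝ) / (k + 1) ≤ K * (4 * Real.log L) :=
              mul_le_mul_of_nonneg_left this hKpos.le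
          _ = 4 * K * Real.log L := by ring


/-- If `φ : D → ℝ` is non-negative and of finite mean oscillation at `z₀ ∈ D`, then there is
`ε₀ ∈ (0, δ₀)` with `δ₀ = min(e^{−e}, d₀)`, `d₀ = sup_{z ∈ D} |z − z₀|`, such that
`∫_{ε<|z−z₀|<ε₀} φ(z)/(|z−z₀|·log(1/|z−z₀|))² dm(z) = O(log log(1/ε))` as `ε → 0`. -/
theorem fmo_annulus_estimate (D : Set ℂ) (hD : IsOpen D) (hDconn : IsConnected D)
    (z₀ : ℂ) (hz₀ : z₀ ∈ D) (φ : ℂ → ℝ)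
    (hnonneg : ∀ z ∈ D, 0 ≤ φ z)
    (hfmo : HasFiniteMeanOscillationAt D φ z₀) :
    ∃ ε₀ : ℝ, 0 < ε₀ ∧
      ENNReal.ofReal ε₀ <
        min (ENNReal.ofReal (Real.exp (-(Real.exp 1)))) (⨆ z ∈ D, edist z z₀) ∧
      ∃ C > (0 : ℝ), ∃ ε₁ ∈ Set.Ioo (0 : ℝ) ε₀, ∀ ε ∈ Set.Ioo (0 : ℝ) ε₁,
        (∫⁻ z in ({z : ℂ | ε < dist z z₀ ∧ dist z z₀ < ε₀} ∩ D),
            ENNReal.ofReal (φ z / (dist z z₀ * Real.log (1 / dist z z₀)) ^ 2)) ≤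
          ENNReal.ofReal (C * Real.log (Real.log (1 / ε))) := by
  exact fmo_annulus_estimate_aux D hD hDconn z₀ hz₀ φ hnonneg hfmo
end

section
/- Let Q : 𝔻 → [0, ∞] be a measurable function on the unit disk 𝔻 = {z ∈ ℂ : |z| < 1} such that ∫_𝔻 Φ(Q(z)) dm(z) < ∞, where Φ : [0, ∞] → [0, ∞] is a non-decreasing convex function satisfying ∫_δ^∞ dτ/(τ·Φ⁻¹(τ)) = ∞ for some δ > Φ(0). Then ∫_0^1 dr/(r·q(r)) = ∞, where q(r) = (1/(2π)) ∫_0^{2π} Q(r·e^{iθ}) dθ is the average of Q over the circle |z| = r. -/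
open MeasureTheory ENNReal NNReal

/-- The generalized inverse `Φ⁻¹(τ) = inf {t : Φ(t) ≥ τ}` of a non-decreasing function
`Φ : [0,∞] → [0,∞]` (with `inf ∅ = ∞`). -/
noncomputable def PhiInv (Φ : ℝ≥0∞ → ℝ≥0∞) (τ : ℝ≥0∞) : ℝ≥0∞ :=
  sInf {t : ℝ≥0∞ | τ ≤ Φ t}


section AuxJensen


lemma finJensen {Φ : ℝ≥0∞ → ℝ≥0∞}
    (hΦconv : ∀ x y : ℝ≥0∞, ∀ a b : ℝ≥0, a + b = 1 →
      Φ (a • x + b • y) ≤ a • Φ x + b • Φ y)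
    {ι : Type*} (s : Finset ι) :
    ∀ (a : ι → ℝ≥0) (x : ι → ℝ≥0∞), (∑ i ∈ s, a i = 1) →
      Φ (∑ i ∈ s, (a i : ℝ≥0∞) * x i) ≤ ∑ i ∈ s, (a i : ℝ≥0∞) * Φ (x i) := by
  have hconv' : ∀ x y : ℝ≥0∞, ∀ a b : ℝ≥0, a + b = 1 →
      Φ ((a : ℝ≥0∞) * x + (b : ℝ≥0∞) * y) ≤ (a : ℝ≥0∞) * Φ x + (b : ℝ≥0∞) * Φ y := by
    intro x y a b hab
    simpa [ENNReal.smul_def] using hΦconv x y a b hab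
  classical
  induction s using Finset.induction with
  | empty => intro a x ha; simp at ha
  | @insert j t hj ih =>
    intro a x ha
    rw [Finset.sum_insert hj] at ha ⊢
    rw [Finset.sum_insert hj]
    set b : ℝ≥0 := ∑ i ∈ t, a i with hb
    by_cases hb0 : b = 0
    · have hz : ∀ i ∈ t, a i = 0 := Finset.sum_eq_zero_iff.mp (hb ▸ hb0)
      have haj : a j = 1 := by simpa [hb0] using ha
      have h1 : ∑ i ∈ t, (a i : ℝ≥0∞) * x i = 0 :=
        Finset.sum_eq_zero fun i hi => by simp [hz i hi]
      have h2 : ∑ i ∈ t, (a i : ℝ≥0∞) * Φ (x i) = 0 :=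
        Finset.sum_eq_zero fun i hi => by simp [hz i hi]
      simp [h1, h2, haj]
    · have hIH := ih (fun i => a i / b) x (by
        rw [← Finset.sum_div, ← hb, div_self hb0])
      have hc := hconv' (x j) (∑ i ∈ t, ((a i / b : ℝ≥0) : ℝ≥0∞) * x i) (a j) b ha
      have hbmul : ∀ g : ι → ℝ≥0∞,
          (b : ℝ≥0∞) * ∑ i ∈ t, ((a i / b : ℝ≥0) : ℝ≥0∞) * g i
            = ∑ i ∈ t, (a i : ℝ≥0∞) * g i := by
        intro g
        rw [Finset.mul_sum]
        refine Finset.sum_congr rfl fun i hi => ?_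
        rw [← mul_assoc, ← ENNReal.coe_mul, mul_comm b, div_mul_cancel₀ _ hb0]
      calc Φ ((a j : ℝ≥0∞) * x j + ∑ i ∈ t, (a i : ℝ≥0∞) * x i)
          = Φ ((a j : ℝ≥0∞) * x j + (b : ℝ≥0∞) * ∑ i ∈ t, ((a i / b : ℝ≥0) : ℝ≥0∞) * x i) := by
            rw [hbmul]
        _ ≤ (a j : ℝ≥0∞) * Φ (x j) + (b : ℝ≥0∞) * Φ (∑ i ∈ t, ((a i / b : ℝ≥0) : ℝ≥0∞) * x i) := hc
        _ ≤ (a j : ℝ≥0∞) * Φ (x j) + (b : ℝ≥0∞) * ∑ i ∈ t, ((a i / b : ℝ≥0) : ℝ≥0∞) * Φ (x i) := by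
            gcongr
        _ = (a j : ℝ≥0∞) * Φ (x j) + ∑ i ∈ t, (a i : ℝ≥0∞) * Φ (x i) := by rw [hbmul]

lemma weakJensen {α : Type*} [MeasurableSpace α] (μ : Measure α) [IsProbabilityMeasure μ]
    {Φ : ℝ≥0∞ → ℝ≥0∞} (hΦmono : Monotone Φ)
    (hΦconv : ∀ x y : ℝ≥0∞, ∀ a b : ℝ≥0, a + b = 1 →
      Φ (a • x + b • y) ≤ a • Φ x + b • Φ y)
    {f : α → ℝ≥0∞} (hf : Measurable f) {s : ℝ≥0∞}
    (hs : s < ∫⁻ a, f a ∂μ) :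
    Φ s ≤ ∫⁻ a, Φ (f a) ∂μ := by
  rw [lintegral_eq_iSup_eapprox_lintegral hf] at hs
  obtain ⟨n, hn⟩ := lt_iSup_iff.mp hs
  set g := SimpleFunc.eapprox f n with hg
  set a : ℝ≥0∞ → ℝ≥0 := fun y => (μ (g ⁻¹' {y})).toNNReal with ha
  have hcoe : ∀ y, ((a y : ℝ≥0∞)) = μ (g ⁻¹' {y}) := fun y =>
    ENNReal.coe_toNNReal (measure_ne_top μ _)
  have hasum : ∑ y ∈ g.range, a y = 1 := by
    have h := SimpleFunc.sum_range_measure_preimage_singleton g μ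
    rw [measure_univ] at h
    have : ((∑ y ∈ g.range, a y : ℝ≥0) : ℝ≥0∞) = 1 := by
      push_cast
      simpa [hcoe] using h
    exact_mod_cast this
  have hglint : g.lintegral μ = ∑ y ∈ g.range, (a y : ℝ≥0∞) * y := by
    rw [SimpleFunc.lintegral]
    exact Finset.sum_congr rfl fun y _ => by rw [hcoe, mul_comm]
  calc Φ s ≤ Φ (g.lintegral μ) := hΦmono hn.le
    _ = Φ (∑ y ∈ g.range, (a y : ℝ≥0∞) * y) := by rw [hglint]
    _ ≤ ∑ y ∈ g.range, (a y : ℝ≥0∞) * Φ y := finJensen hΦconv g.range a id hasum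
    _ = (g.map Φ).lintegral μ := by
        rw [SimpleFunc.map_lintegral]
        exact Finset.sum_congr rfl fun y _ => by rw [hcoe, mul_comm]
    _ = ∫⁻ x, (g.map Φ) x ∂μ := (SimpleFunc.lintegral_eq_lintegral _ μ).symm
    _ ≤ ∫⁻ x, Φ (f x) ∂μ := by
        refine lintegral_mono fun x => ?_
        rw [SimpleFunc.map_apply]
        refine hΦmono ?_
        rw [hg, ← SimpleFunc.iSup_eapprox_apply hf x]
        exact le_iSup (fun n => (SimpleFunc.eapprox f n) x) n

end AuxJensen

section AuxPolar
open Real Set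


lemma myLintegral_image {s : Set ℝ} {f : ℝ → ℝ} {f' : ℝ → ℝ}
    (hs : MeasurableSet s) (hf' : ∀ x ∈ s, HasDerivWithinAt f (f' x) s x)
    (hf : Set.InjOn f s) (g : ℝ → ℝ≥0∞) :
    ∫⁻ x in f '' s, g x = ∫⁻ x in s, ENNReal.ofReal |f' x| * g (f x) := by
  simpa only [ContinuousLinearMap.det_toSpanSingleton] using
    lintegral_image_eq_lintegral_abs_det_fderiv_mul volume hs
      (fun x hx => (hf' x hx).hasFDerivWithinAt) hf g

lemma myLintegral_polar (f : ℝ × ℝ → ℝ≥0∞) :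
    ∫⁻ p in polarCoord.target, ENNReal.ofReal p.1 * f (polarCoord.symm p) = ∫⁻ p, f p := by
  set B : ℝ × ℝ → ℝ × ℝ →L[ℝ] ℝ × ℝ := fun p =>
    LinearMap.toContinuousLinearMap (Matrix.toLin (Module.Basis.finTwoProd ℝ) (Module.Basis.finTwoProd ℝ)
      !![cos p.2, -p.1 * sin p.2; sin p.2, p.1 * cos p.2])
  have A : ∀ p ∈ polarCoord.target, HasFDerivWithinAt polarCoord.symm (B p) polarCoord.target p :=
    fun p _ => (hasFDerivAt_polarCoord_symm p).hasFDerivWithinAt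
  have B_det : ∀ p, (B p).det = p.1 := by
    intro p
    conv_rhs => rw [← one_mul p.1, ← cos_sq_add_sin_sq p.2]
    simp only [B, neg_mul, LinearMap.det_toContinuousLinearMap, LinearMap.det_toLin,
      Matrix.det_fin_two_of, sub_neg_eq_add]
    ring
  symm
  calc
    ∫⁻ p, f p = ∫⁻ p in polarCoord.source, f p := by
      rw [← setLIntegral_univ]
      exact setLIntegral_congr polarCoord_source_ae_eq_univ.symm
    _ = ∫⁻ p in polarCoord.symm '' polarCoord.target, f p := by
      rw [polarCoord.symm_image_target_eq_source]
    _ = ∫⁻ p in polarCoord.target, ENNReal.ofReal |(B p).det| * f (polarCoord.symm p) :=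
      lintegral_image_eq_lintegral_abs_det_fderiv_mul volume polarCoord.open_target.measurableSet A polarCoord.symm.injOn f
    _ = ∫⁻ p in polarCoord.target, ENNReal.ofReal p.1 * f (polarCoord.symm p) := by
      refine setLIntegral_congr_fun polarCoord.open_target.measurableSet
        (fun p hp => ?_)
      rw [B_det, abs_of_pos hp.1]

lemma myLintegral_polarC (f : ℂ → ℝ≥0∞) :
    ∫⁻ p in polarCoord.target, ENNReal.ofReal p.1 * f (Complex.polarCoord.symm p) =
      ∫⁻ z, f z := by
  rw [← (Complex.volume_preserving_equiv_real_prod.symm).lintegral_comp_emb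
    Complex.measurableEquivRealProd.symm.measurableEmbedding, ← myLintegral_polar]
  rfl

lemma symm_eq (r θ : ℝ) :
    Complex.polarCoord.symm (r, θ) = (r : ℂ) * Complex.exp ((θ : ℂ) * Complex.I) := by
  rw [Complex.polarCoord_symm_apply, Complex.exp_mul_I]
  push_cast
  ring

lemma myLintegral_ball (f : ℂ → ℝ≥0∞) (hf : Measurable f) :
    ∫⁻ z in Metric.ball (0 : ℂ) 1, f z
      = ∫⁻ r in Set.Ioo (0 : ℝ) 1, ∫⁻ θ in Set.Ioo (-Real.pi) Real.pi,
          ENNReal.ofReal r * f ((r : ℂ) * Complex.exp ((θ : ℂ) * Complex.I)) := by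
  have hmb : MeasurableSet (Metric.ball (0 : ℂ) 1) := Metric.isOpen_ball.measurableSet
  rw [← lintegral_indicator hmb, ← myLintegral_polarC]
  have hset : ∀ p : ℝ × ℝ, p ∈ polarCoord.target →
      ENNReal.ofReal p.1 * (Metric.ball (0 : ℂ) 1).indicator f (Complex.polarCoord.symm p)
        = (Set.Ioo (0:ℝ) 1 ×ˢ Set.Ioo (-Real.pi) Real.pi).indicator
            (fun p : ℝ × ℝ => ENNReal.ofReal p.1 *
              f ((p.1 : ℂ) * Complex.exp ((p.2 : ℂ) * Complex.I))) p := by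
    rintro ⟨r, θ⟩ hp
    rw [polarCoord_target] at hp
    obtain ⟨hr, hθ⟩ := hp
    simp only [Set.mem_Ioi] at hr
    have habs : ‖Complex.polarCoord.symm (r, θ)‖ = r := by
      rw [Complex.norm_polarCoord_symm, abs_of_pos hr]
    by_cases h1 : r < 1
    · rw [Set.indicator_of_mem, Set.indicator_of_mem]
      · rw [symm_eq]
      · exact Set.mk_mem_prod ⟨hr, h1⟩ hθ
      · rw [Metric.mem_ball, dist_zero_right, habs]; exact h1
    · rw [Set.indicator_of_notMem, Set.indicator_of_notMem]
      · simp
      · rintro ⟨⟨-, hlt⟩, -⟩; exact h1 hlt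
      · rw [Metric.mem_ball, dist_zero_right, habs]; exact h1
  rw [setLIntegral_congr_fun polarCoord.open_target.measurableSet
    hset]
  have hsub : (Set.Ioo (0:ℝ) 1 ×ˢ Set.Ioo (-Real.pi) Real.pi) ⊆ polarCoord.target := by
    rw [polarCoord_target]
    exact Set.prod_mono (Set.Ioo_subset_Ioi_self) subset_rfl
  have hmeas2 : MeasurableSet (Set.Ioo (0:ℝ) 1 ×ˢ Set.Ioo (-Real.pi) Real.pi) :=
    measurableSet_Ioo.prod measurableSet_Ioo
  rw [lintegral_indicator hmeas2, Measure.restrict_restrict hmeas2,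
    Set.inter_eq_self_of_subset_left hsub]
  rw [Measure.volume_eq_prod, ← Measure.prod_restrict]
  have hgm : Measurable (fun p : ℝ × ℝ => ENNReal.ofReal p.1 *
      f ((p.1 : ℂ) * Complex.exp ((p.2 : ℂ) * Complex.I))) := by
    apply Measurable.mul
    · exact ENNReal.measurable_ofReal.comp measurable_fst
    · apply hf.comp
      apply Measurable.mul
      · exact Complex.measurable_ofReal.comp measurable_fst
      · exact (Complex.measurable_exp.comp
          ((Complex.measurable_ofReal.comp measurable_snd).mul measurable_const))
  rw [lintegral_prod _ hgm.aemeasurable]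

set_option maxHeartbeats 1000000 in
lemma myShift (f : ℝ → ℝ≥0∞) (hf : Measurable f)
    (hper : ∀ x : ℝ, f (x + 2 * Real.pi) = f x) :
    ∫⁻ θ in Set.Ioo (-Real.pi) Real.pi, f θ = ∫⁻ θ in Set.Ioo 0 (2 * Real.pi), f θ := by
  have hsplit1 : Set.Ioo (-Real.pi) Real.pi = Set.Ioo (-Real.pi) 0 ∪ Set.Ico 0 Real.pi :=
    (Set.Ioo_union_Ico_eq_Ioo (neg_lt_zero.mpr Real.pi_pos) Real.pi_pos.le).symm
  have hsplit2 : Set.Ioo 0 (2*Real.pi) = Set.Ioo 0 Real.pi ∪ Set.Ico Real.pi (2*Real.pi) :=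
    (Set.Ioo_union_Ico_eq_Ioo Real.pi_pos (by linarith [Real.pi_pos])).symm
  have hd1 : Disjoint (Set.Ioo (-Real.pi) 0) (Set.Ico 0 Real.pi) := by
    apply Set.disjoint_left.mpr; rintro x ⟨-, h1⟩ ⟨h2, -⟩; linarith
  have hd2 : Disjoint (Set.Ioo 0 Real.pi) (Set.Ico Real.pi (2*Real.pi)) := by
    apply Set.disjoint_left.mpr; rintro x ⟨-, h1⟩ ⟨h2, -⟩; linarith
  rw [hsplit1, hsplit2, lintegral_union measurableSet_Ico hd1,
    lintegral_union measurableSet_Ico hd2]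
  have e1 : ∫⁻ θ in Set.Ico 0 Real.pi, f θ = ∫⁻ θ in Set.Ioo 0 Real.pi, f θ :=
    by rw [Measure.restrict_congr_set MeasureTheory.Ioo_ae_eq_Ico]
  have e2 : ∫⁻ θ in Set.Ico Real.pi (2*Real.pi), f θ = ∫⁻ θ in Set.Ioo Real.pi (2*Real.pi), f θ :=
    by rw [Measure.restrict_congr_set MeasureTheory.Ioo_ae_eq_Ico]
  have e3 : ∫⁻ θ in Set.Ioo (-Real.pi) 0, f θ = ∫⁻ θ in Set.Ioo Real.pi (2*Real.pi), f θ := by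
    have hpre : (fun x : ℝ => x + 2*Real.pi) ⁻¹' (Set.Ioo Real.pi (2*Real.pi)) = Set.Ioo (-Real.pi) 0 := by
      ext x
      simp only [Set.mem_preimage, Set.mem_Ioo]
      constructor <;> rintro ⟨h1, h2⟩ <;> constructor <;> linarith
    have h4 := (measurePreserving_add_right (volume : Measure ℝ) (2*Real.pi)).setLIntegral_comp_preimage
      (measurableSet_Ioo (a := Real.pi) (b := 2*Real.pi)) hf
    rw [hpre] at h4
    rw [← h4]
    exact setLIntegral_congr_fun measurableSet_Ioo
      (fun x _ => (hper x).symm)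
  rw [e1, e2, e3, add_comm]

end AuxPolar

section AuxHelper
open Set
theorem helper (Φ : ℝ≥0∞ → ℝ≥0∞) (hΦmono : Monotone Φ)
    (hΦconv : ∀ x y : ℝ≥0∞, ∀ a b : ℝ≥0, a + b = 1 →
      Φ (a • x + b • y) ≤ a • Φ x + b • Φ y)
    (F : ℝ × ℝ → ℝ≥0∞) (hF : Measurable F)
    (hA : (∫⁻ r in Set.Ioo (0:ℝ) 1, ENNReal.ofReal r *
        ∫⁻ θ in Set.Ioo (0:ℝ) (2*Real.pi), Φ (F (r, θ))) < ⊤)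
    (δ : ℝ) (hδ : Φ 0 < ENNReal.ofReal δ)
    (hdiv : (∫⁻ τ in Set.Ioi δ,
        (ENNReal.ofReal τ * PhiInv Φ (ENNReal.ofReal τ))⁻¹) = ⊤) :
    (∫⁻ r in Set.Ioo (0:ℝ) 1,
        (ENNReal.ofReal r *
          ((∫⁻ θ in Set.Ioo (0:ℝ) (2*Real.pi), F (r, θ)) /
            ENNReal.ofReal (2*Real.pi)))⁻¹) = ⊤ := by
  have hπ : (0:ℝ) < 2*Real.pi := by positivity
  have hπ0 : ENNReal.ofReal (2*Real.pi) ≠ 0 := by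
    simp [ENNReal.ofReal_eq_zero]; linarith
  have hπtop : ENNReal.ofReal (2*Real.pi) ≠ ⊤ := ENNReal.ofReal_ne_top
  have hΦmeas : Measurable Φ := hΦmono.measurable
  have hΦF : Measurable (fun p : ℝ × ℝ => Φ (F p)) := hΦmeas.comp hF
  have hPmeas : Measurable (fun r => ∫⁻ θ in Set.Ioo (0:ℝ) (2*Real.pi), Φ (F (r, θ))) :=
    Measurable.lintegral_prod_right (f := fun r θ => Φ (F (r, θ))) hΦF
  have hQmeas : Measurable (fun r => ∫⁻ θ in Set.Ioo (0:ℝ) (2*Real.pi), F (r, θ)) :=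
    Measurable.lintegral_prod_right (f := fun r θ => F (r, θ)) hF
  have hδpos : (0:ℝ) < δ := by
    by_contra h
    push_neg at h
    rw [ENNReal.ofReal_eq_zero.mpr h] at hδ
    exact absurd hδ (by simp)
  by_cases hD : ∀ t : ℝ≥0∞, t ≠ 0 → Φ t = ⊤
  · -- degenerate branch
    have hmm : Measurable (fun r => ENNReal.ofReal r *
        ∫⁻ θ in Set.Ioo (0:ℝ) (2*Real.pi), Φ (F (r, θ))) :=
      ENNReal.measurable_ofReal.mul hPmeas
    have hae : ∀ᵐ r ∂(volume.restrict (Set.Ioo (0:ℝ) 1)),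
        ENNReal.ofReal r * (∫⁻ θ in Set.Ioo (0:ℝ) (2*Real.pi), Φ (F (r, θ))) < ⊤ :=
      ae_lt_top hmm hA.ne
    have hmem : ∀ᵐ r ∂(volume.restrict (Set.Ioo (0:ℝ) 1)), r ∈ Set.Ioo (0:ℝ) 1 :=
      ae_restrict_mem measurableSet_Ioo
    have htop : ∀ᵐ r ∂(volume.restrict (Set.Ioo (0:ℝ) 1)),
        (ENNReal.ofReal r *
          ((∫⁻ θ in Set.Ioo (0:ℝ) (2*Real.pi), F (r, θ)) /
            ENNReal.ofReal (2*Real.pi)))⁻¹ = (⊤ : ℝ≥0∞) := by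
      filter_upwards [hae, hmem] with r h1 h2
      have hr0 : ENNReal.ofReal r ≠ 0 := by
        simp [ENNReal.ofReal_eq_zero]; linarith [h2.1]
      have hPfin : (∫⁻ θ in Set.Ioo (0:ℝ) (2*Real.pi), Φ (F (r, θ))) ≠ ⊤ := by
        intro hcon
        rw [hcon, ENNReal.mul_top hr0] at h1
        exact absurd h1 (by simp)
      have hfin : ∀ᵐ θ ∂(volume.restrict (Set.Ioo (0:ℝ) (2*Real.pi))),
          Φ (F (r, θ)) < ⊤ :=
        ae_lt_top (hΦmeas.comp (hF.comp measurable_prodMk_left)) hPfin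
      have hzero : ∀ᵐ θ ∂(volume.restrict (Set.Ioo (0:ℝ) (2*Real.pi))), F (r, θ) = 0 := by
        filter_upwards [hfin] with θ hθ
        by_contra hne
        rw [hD _ hne] at hθ
        exact absurd hθ (by simp)
      have : (∫⁻ θ in Set.Ioo (0:ℝ) (2*Real.pi), F (r, θ)) = 0 := by
        rw [lintegral_congr_ae (hzero.mono fun θ h => h)]
        simp
      rw [this, ENNReal.zero_div, mul_zero, ENNReal.inv_zero]
    rw [lintegral_congr_ae htop, lintegral_const, Measure.restrict_apply_univ,
      Real.volume_Ioo]
    simp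
  · -- main branch
    push_neg at hD
    obtain ⟨t₀, ht₀ne, hΦt₀⟩ := hD
    set u₀ : ℝ≥0∞ := min t₀ 1 with hu₀
    have hu₀0 : u₀ ≠ 0 := by
      simp only [hu₀, ne_eq, min_eq_iff]
      intro h
      rcases h with ⟨h, -⟩ | ⟨h, -⟩
      · exact ht₀ne h
      · exact one_ne_zero h
    have hΦu₀ : Φ u₀ ≠ ⊤ := fun h => hΦt₀ (top_le_iff.mp (h ▸ hΦmono (min_le_left _ _)))
    have hΦ0top : Φ 0 ≠ ⊤ := fun h => by simp [h] at hδ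
    -- positivity of PhiInv at δ
    have hε₀ : 0 < PhiInv Φ (ENNReal.ofReal δ) := by
      obtain ⟨n, hn0, hn⟩ := ENNReal.exists_nnreal_pos_mul_lt hΦu₀
        (fun h => absurd (tsub_eq_zero_iff_le.mp h) (not_le.mpr hδ))
      set b : ℝ≥0 := min n 1 with hbdef
      have hb0 : b ≠ 0 := by
        simp only [hbdef, ne_eq, min_eq_iff]
        rintro (⟨h, -⟩ | ⟨h, -⟩)
        · exact hn0.ne' h
        · exact one_ne_zero h
      have hb1 : b ≤ 1 := min_le_right _ _
      have hab : (1 - b) + b = 1 := tsub_add_cancel_of_le hb1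
      have hcomb := hΦconv 0 u₀ (1 - b) b hab
      rw [smul_zero, zero_add] at hcomb
      have hΦu : Φ ((b : ℝ≥0∞) * u₀) < ENNReal.ofReal δ := by
        have h1 : ((1 - b : ℝ≥0) : ℝ≥0∞) • Φ 0 ≤ Φ 0 := by
          rw [smul_eq_mul]
          calc ((1 - b : ℝ≥0) : ℝ≥0∞) * Φ 0 ≤ 1 * Φ 0 := by
                gcongr
                exact_mod_cast tsub_le_self
            _ = Φ 0 := one_mul _
        have h2 : (b : ℝ≥0∞) • Φ u₀ < ENNReal.ofReal δ - Φ 0 := by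
          rw [smul_eq_mul]
          calc (b : ℝ≥0∞) * Φ u₀ ≤ (n : ℝ≥0∞) * Φ u₀ := by
                gcongr
                exact_mod_cast min_le_left n 1
            _ < ENNReal.ofReal δ - Φ 0 := hn
        calc Φ ((b : ℝ≥0∞) * u₀) = Φ ((b : ℝ≥0∞) • u₀) := by rw [smul_eq_mul]
          _ ≤ ((1 - b : ℝ≥0) : ℝ≥0∞) • Φ 0 + (b : ℝ≥0∞) • Φ u₀ := hcomb
          _ < Φ 0 + (ENNReal.ofReal δ - Φ 0) :=
              ENNReal.add_lt_add_of_le_of_lt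
                (fun h => absurd h (by simp only [smul_eq_mul]; exact ENNReal.mul_ne_top ENNReal.coe_ne_top hΦ0top)) h1 h2
          _ = ENNReal.ofReal δ := add_tsub_cancel_of_le hδ.le
      have hu : ((b : ℝ≥0∞) * u₀) ≠ 0 :=
        mul_ne_zero (by exact_mod_cast hb0) hu₀0
      refine lt_of_lt_of_le (pos_iff_ne_zero.mpr hu) (le_sInf fun t ht => ?_)
      by_contra hlt
      push_neg at hlt
      exact absurd (lt_of_le_of_lt (le_trans ht (hΦmono hlt.le)) hΦu) (lt_irrefl _)
    have hPhiInvMono : Monotone (PhiInv Φ) := fun a b hab =>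
      le_sInf fun t ht => sInf_le (le_trans hab ht)
    have hδ0' : ENNReal.ofReal δ ≠ 0 := by
      simp [ENNReal.ofReal_eq_zero]; linarith
    have hK0 : ENNReal.ofReal δ * PhiInv Φ (ENNReal.ofReal δ) ≠ 0 :=
      mul_ne_zero hδ0' hε₀.ne'
    -- tail divergence
    have htail : ∀ T : ℝ, δ ≤ T →
        ∫⁻ τ in Set.Ioi T, (ENNReal.ofReal τ * PhiInv Φ (ENNReal.ofReal τ))⁻¹ = ⊤ := by
      intro T hT
      have hsplit : Set.Ioi δ = Set.Ioc δ T ∪ Set.Ioi T := (Set.Ioc_union_Ioi_eq_Ioi hT).symm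
      have hdisj : Disjoint (Set.Ioc δ T) (Set.Ioi T) := Set.Ioc_disjoint_Ioi le_rfl
      rw [hsplit, lintegral_union measurableSet_Ioi hdisj] at hdiv
      have hfin1 : (∫⁻ τ in Set.Ioc δ T,
          (ENNReal.ofReal τ * PhiInv Φ (ENNReal.ofReal τ))⁻¹) ≠ ⊤ := by
        have hb : (∫⁻ τ in Set.Ioc δ T,
            (ENNReal.ofReal τ * PhiInv Φ (ENNReal.ofReal τ))⁻¹)
            ≤ (ENNReal.ofReal δ * PhiInv Φ (ENNReal.ofReal δ))⁻¹ * volume (Set.Ioc δ T) := by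
          rw [← setLIntegral_const]
          refine setLIntegral_mono measurable_const fun τ hτ => ?_
          refine ENNReal.inv_le_inv' (mul_le_mul' (ENNReal.ofReal_le_ofReal hτ.1.le)
            (hPhiInvMono (ENNReal.ofReal_le_ofReal hτ.1.le)))
        refine ne_top_of_le_ne_top ?_ hb
        exact (ENNReal.mul_lt_top (ENNReal.inv_lt_top.mpr (pos_iff_ne_zero.mpr hK0))
          measure_Ioc_lt_top).ne
      by_contra hcon
      exact absurd hdiv (ENNReal.add_ne_top.mpr ⟨hfin1, hcon⟩)
    -- choice of c
    set c : ℝ := max δ 1 with hcdef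
    have hcδ : δ ≤ c := le_max_left _ _
    have hc1 : (1:ℝ) ≤ c := le_max_right _ _
    have hcpos : (0:ℝ) < c := by linarith
    -- change of variables
    have himg : (fun r : ℝ => 2*c/r^2) '' (Set.Ioo 0 1) = Set.Ioi (2*c) := by
      ext τ
      constructor
      · rintro ⟨r, ⟨hr0, hr1⟩, rfl⟩
        have hr2 : (0:ℝ) < r^2 := by positivity
        have h1 : r^2 < 1 := by nlinarith
        refine Set.mem_Ioi.mpr ((lt_div_iff₀ hr2).mpr ?_)
        nlinarith
      · intro hτ
        rw [Set.mem_Ioi] at hτ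
        have hτpos : (0:ℝ) < τ := by linarith
        have hdivpos : (0:ℝ) < 2*c/τ := by positivity
        have hdivlt : 2*c/τ < 1 := (div_lt_one hτpos).mpr hτ
        refine ⟨Real.sqrt (2*c/τ), ⟨Real.sqrt_pos.mpr hdivpos, ?_⟩, ?_⟩
        · have := Real.sqrt_lt_sqrt hdivpos.le hdivlt
          rwa [Real.sqrt_one] at this
        · show 2*c/(Real.sqrt (2*c/τ))^2 = τ
          rw [Real.sq_sqrt hdivpos.le]
          field_simp
    have hderiv : ∀ r ∈ Set.Ioo (0:ℝ) 1,
        HasDerivWithinAt (fun r : ℝ => 2*c/r^2) (-(4*c)/r^3) (Set.Ioo 0 1) r := by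
      intro r hr
      have hr0 : r ≠ 0 := ne_of_gt hr.1
      have h := (hasDerivAt_const r (2*c)).div (hasDerivAt_pow 2 r) (pow_ne_zero 2 hr0)
      refine HasDerivAt.hasDerivWithinAt ?_
      convert h using 1
      · rfl
      · rfl
      field_simp
      ring
    have hinj : Set.InjOn (fun r : ℝ => 2*c/r^2) (Set.Ioo 0 1) := by
      intro a ha b hb hab
      simp only at hab
      have ha2 : (0:ℝ) < a^2 := pow_pos ha.1 2
      have hb2 : (0:ℝ) < b^2 := pow_pos hb.1 2
      have h2 : a^2 = b^2 := by
        rw [div_eq_div_iff ha2.ne' hb2.ne'] at hab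
        nlinarith
      have h3 : (a-b)*(a+b) = 0 := by nlinarith
      rcases mul_eq_zero.mp h3 with h4 | h4
      · linarith
      · nlinarith [ha.1, hb.1]
    have hCoV := myLintegral_image measurableSet_Ioo hderiv hinj
      (fun τ => (ENNReal.ofReal τ)⁻¹ * (PhiInv Φ (ENNReal.ofReal τ))⁻¹)
    rw [himg] at hCoV
    have hLHS : ∫⁻ τ in Set.Ioi (2*c),
        (ENNReal.ofReal τ)⁻¹ * (PhiInv Φ (ENNReal.ofReal τ))⁻¹ = ⊤ := by
      rw [← htail (2*c) (by linarith)]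
      refine setLIntegral_congr_fun measurableSet_Ioi
        (fun τ hτ => ?_)
      rw [Set.mem_Ioi] at hτ
      have hτ0 : ENNReal.ofReal τ ≠ 0 := by
        simp only [ne_eq, ENNReal.ofReal_eq_zero, not_le]; linarith
      rw [ENNReal.mul_inv (Or.inl hτ0) (Or.inl ENNReal.ofReal_ne_top)]
    -- simplify the RHS of the change of variables
    have hRHSpt : ∀ r ∈ Set.Ioo (0:ℝ) 1,
        ENNReal.ofReal |(-(4*c)/r^3)| *
          ((ENNReal.ofReal (2*c/r^2))⁻¹ * (PhiInv Φ (ENNReal.ofReal (2*c/r^2)))⁻¹)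
        = 2 * ((ENNReal.ofReal r)⁻¹ * (PhiInv Φ (ENNReal.ofReal (2*c/r^2)))⁻¹) := by
      intro r hr
      have hr0 : (0:ℝ) < r := hr.1
      have hr3 : (0:ℝ) < r^3 := pow_pos hr0 3
      have hr2 : (0:ℝ) < r^2 := pow_pos hr0 2
      have habs : |(-(4*c)/r^3)| = 4*c/r^3 := by
        rw [abs_div, abs_neg, abs_of_pos (by linarith : (0:ℝ) < 4*c), abs_of_pos hr3]
      rw [habs, ← mul_assoc, ← mul_assoc]
      congr 1
      rw [← ENNReal.ofReal_inv_of_pos (by positivity : (0:ℝ) < 2*c/r^2),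
        ← ENNReal.ofReal_mul (by positivity : (0:ℝ) ≤ 4*c/r^3)]
      have hre : 4*c/r^3 * (2*c/r^2)⁻¹ = 2 * r⁻¹ := by
        field_simp
        ring
      rw [hre, ENNReal.ofReal_mul (by norm_num : (0:ℝ) ≤ 2),
        ENNReal.ofReal_inv_of_pos hr0]
      norm_num
    have hX : ∫⁻ r in Set.Ioo (0:ℝ) 1,
        (ENNReal.ofReal r)⁻¹ * (PhiInv Φ (ENNReal.ofReal (2*c/r^2)))⁻¹ = ⊤ := by
      have h1 : ∫⁻ r in Set.Ioo (0:ℝ) 1,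
          2 * ((ENNReal.ofReal r)⁻¹ * (PhiInv Φ (ENNReal.ofReal (2*c/r^2)))⁻¹) = ⊤ := by
        rw [← setLIntegral_congr_fun measurableSet_Ioo
          hRHSpt, ← hCoV, hLHS]
      rw [lintegral_const_mul' 2 _ (by norm_num : (2:ℝ≥0∞) ≠ ⊤)] at h1
      by_contra hcon
      exact absurd h1 (ENNReal.mul_ne_top (by norm_num) hcon)
    -- split into good and bad sets
    set G : Set ℝ := Set.Ioo (0:ℝ) 1 ∩ {r : ℝ |
      (∫⁻ θ in Set.Ioo (0:ℝ) (2*Real.pi), Φ (F (r, θ))) / ENNReal.ofReal (2*Real.pi)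
        ≤ ENNReal.ofReal (c/r^2)} with hGdef
    have hGmeas : MeasurableSet G := by
      refine measurableSet_Ioo.inter (measurableSet_le (hPmeas.div measurable_const) ?_)
      exact ENNReal.measurable_ofReal.comp (measurable_const.div (measurable_id.pow_const 2))
    have hGsub : G ⊆ Set.Ioo (0:ℝ) 1 := Set.inter_subset_left
    have hsplitG : Set.Ioo (0:ℝ) 1 = G ∪ (Set.Ioo (0:ℝ) 1 \ G) :=
      (Set.union_diff_cancel hGsub).symm
    have hdisjG : Disjoint G (Set.Ioo (0:ℝ) 1 \ G) := Set.disjoint_sdiff_right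
    rw [hsplitG, lintegral_union (measurableSet_Ioo.diff hGmeas) hdisjG] at hX
    -- Chebyshev bound on the bad set
    have hChe : (∫⁻ r in Set.Ioo (0:ℝ) 1 \ G, (ENNReal.ofReal r)⁻¹) ≠ ⊤ := by
      intro hcon
      have hpt : ∀ r ∈ Set.Ioo (0:ℝ) 1 \ G,
          ENNReal.ofReal (2*Real.pi*c) * (ENNReal.ofReal r)⁻¹
            ≤ ENNReal.ofReal r * ∫⁻ θ in Set.Ioo (0:ℝ) (2*Real.pi), Φ (F (r, θ)) := by
        rintro r ⟨hrI, hrG⟩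
        have hq : ENNReal.ofReal (c/r^2) <
            (∫⁻ θ in Set.Ioo (0:ℝ) (2*Real.pi), Φ (F (r, θ))) / ENNReal.ofReal (2*Real.pi) := by
          by_contra h
          push_neg at h
          exact hrG ⟨hrI, h⟩
        have hr0 : (0:ℝ) < r := hrI.1
        have hr2 : (0:ℝ) < r^2 := pow_pos hr0 2
        have hP : ENNReal.ofReal (c/r^2) * ENNReal.ofReal (2*Real.pi) <
            ∫⁻ θ in Set.Ioo (0:ℝ) (2*Real.pi), Φ (F (r, θ)) :=
          (ENNReal.lt_div_iff_mul_lt (Or.inl hπ0) (Or.inl hπtop)).mp hq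
        calc ENNReal.ofReal (2*Real.pi*c) * (ENNReal.ofReal r)⁻¹
            = ENNReal.ofReal r * (ENNReal.ofReal (c/r^2) * ENNReal.ofReal (2*Real.pi)) := by
              rw [← ENNReal.ofReal_inv_of_pos hr0,
                ← ENNReal.ofReal_mul (by positivity : (0:ℝ) ≤ 2*Real.pi*c),
                ← ENNReal.ofReal_mul (by positivity : (0:ℝ) ≤ c/r^2),
                ← ENNReal.ofReal_mul hr0.le]
              congr 1
              field_simp
          _ ≤ ENNReal.ofReal r * ∫⁻ θ in Set.Ioo (0:ℝ) (2*Real.pi), Φ (F (r, θ)) :=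
              mul_le_mul_right hP.le _
      have hb := setLIntegral_mono (μ := volume) (s := Set.Ioo (0:ℝ) 1 \ G)
        (ENNReal.measurable_ofReal.mul hPmeas) hpt
      rw [lintegral_const_mul' _ _ ENNReal.ofReal_ne_top, hcon,
        ENNReal.mul_top (by simp [ENNReal.ofReal_eq_zero]; nlinarith : ENNReal.ofReal (2*Real.pi*c) ≠ 0)] at hb
      have hb2 := le_trans hb (lintegral_mono' (Measure.restrict_mono Set.diff_subset le_rfl) le_rfl)
      rw [top_le_iff] at hb2
      exact absurd hb2 hA.ne
    have hfin2 : (∫⁻ r in Set.Ioo (0:ℝ) 1 \ G,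
        (ENNReal.ofReal r)⁻¹ * (PhiInv Φ (ENNReal.ofReal (2*c/r^2)))⁻¹) ≠ ⊤ := by
      have hpt2 : ∀ r ∈ Set.Ioo (0:ℝ) 1 \ G,
          (ENNReal.ofReal r)⁻¹ * (PhiInv Φ (ENNReal.ofReal (2*c/r^2)))⁻¹
            ≤ (ENNReal.ofReal r)⁻¹ * (PhiInv Φ (ENNReal.ofReal δ))⁻¹ := by
        rintro r ⟨hrI, -⟩
        have hr2 : (0:ℝ) < r^2 := pow_pos hrI.1 2
        have hδ2c : δ ≤ 2*c/r^2 := by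
          have h1 : 2*c ≤ 2*c/r^2 := by
            rw [le_div_iff₀ hr2]
            have hr1 : r^2 ≤ 1 := by nlinarith [hrI.1, hrI.2]
            nlinarith [mul_nonneg hcpos.le (sub_nonneg.mpr hr1)]
          linarith
        exact mul_le_mul_right (ENNReal.inv_le_inv'
          (hPhiInvMono (ENNReal.ofReal_le_ofReal hδ2c))) _
      have hb := setLIntegral_mono (μ := volume) (s := Set.Ioo (0:ℝ) 1 \ G)
        ((ENNReal.measurable_ofReal.inv).mul_const _) hpt2
      refine ne_top_of_le_ne_top ?_ hb
      rw [lintegral_mul_const' _ _ (ENNReal.inv_ne_top.mpr hε₀.ne')]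
      exact ENNReal.mul_ne_top hChe (ENNReal.inv_ne_top.mpr hε₀.ne')
    have hGtop : ∫⁻ r in G,
        (ENNReal.ofReal r)⁻¹ * (PhiInv Φ (ENNReal.ofReal (2*c/r^2)))⁻¹ = ⊤ := by
      by_contra hcon
      exact absurd hX (ENNReal.add_ne_top.mpr ⟨hcon, hfin2⟩)
    -- conclude
    rw [hsplitG, lintegral_union (measurableSet_Ioo.diff hGmeas) hdisjG]
    have hGmain : ∫⁻ r in G,
        (ENNReal.ofReal r *
          ((∫⁻ θ in Set.Ioo (0:ℝ) (2*Real.pi), F (r, θ)) /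
            ENNReal.ofReal (2*Real.pi)))⁻¹ = ⊤ := by
      rw [← top_le_iff, ← hGtop]
      refine setLIntegral_mono (μ := volume) ((ENNReal.measurable_ofReal.mul
        (hQmeas.div measurable_const)).inv) ?_
      rintro r ⟨hrI, hrG⟩
      have hr0 : (0:ℝ) < r := hrI.1
      have hr2 : (0:ℝ) < r^2 := pow_pos hr0 2
      have hr0' : ENNReal.ofReal r ≠ 0 := by
        simp only [ne_eq, ENNReal.ofReal_eq_zero, not_le]; linarith
      -- weak Jensen gives the key bound
      have hqP : (∫⁻ θ in Set.Ioo (0:ℝ) (2*Real.pi), F (r, θ)) / ENNReal.ofReal (2*Real.pi)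
          ≤ PhiInv Φ (ENNReal.ofReal (2*c/r^2)) := by
        refine le_sInf fun t ht => ?_
        rw [Set.mem_setOf_eq] at ht
        by_contra hlt
        push_neg at hlt
        set μp : Measure ℝ :=
          (ENNReal.ofReal (2*Real.pi))⁻¹ • volume.restrict (Set.Ioo (0:ℝ) (2*Real.pi)) with hμp
        haveI : IsProbabilityMeasure μp := ⟨by
          rw [hμp, Measure.smul_apply, Measure.restrict_apply_univ, Real.volume_Ioo,
            smul_eq_mul, sub_zero]
          exact ENNReal.inv_mul_cancel hπ0 hπtop⟩
        have hWJ := weakJensen μp hΦmono hΦconv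
          (hF.comp measurable_prodMk_left : Measurable fun θ => F (r, θ))
          (s := t) (by
            rw [hμp, lintegral_smul_measure, smul_eq_mul, ← ENNReal.div_eq_inv_mul]
            exact hlt)
        rw [hμp, lintegral_smul_measure, smul_eq_mul, ← ENNReal.div_eq_inv_mul] at hWJ
        have hlast : Φ t < Φ t := by
          calc Φ t ≤ (∫⁻ θ in Set.Ioo (0:ℝ) (2*Real.pi), Φ (F (r, θ))) /
              ENNReal.ofReal (2*Real.pi) := hWJ
            _ ≤ ENNReal.ofReal (c/r^2) := hrG
            _ < ENNReal.ofReal (2*c/r^2) := by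
                rw [ENNReal.ofReal_lt_ofReal_iff (by positivity)]
                rw [div_lt_div_iff₀ hr2 hr2]
                nlinarith
            _ ≤ Φ t := ht
        exact absurd hlast (lt_irrefl _)
      rw [← ENNReal.mul_inv (Or.inl hr0') (Or.inl ENNReal.ofReal_ne_top)]
      exact ENNReal.inv_le_inv' (mul_le_mul_right hqP _)
    rw [hGmain, top_add]

end AuxHelper

/-- Let `Q : 𝔻 → [0,∞]` be measurable with `∫_𝔻 Φ(Q) dm < ∞` for a non-decreasing convex
function `Φ : [0,∞] → [0,∞]` satisfying `∫_δ^∞ dτ/(τ·Φ⁻¹(τ)) = ∞` for some `δ > Φ(0)`.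
Then `∫_0^1 dr/(r·q(r)) = ∞`, where `q(r)` is the average of `Q` over the circle `|z| = r`. -/
theorem divergence_of_circle_averages (Q : ℂ → ℝ≥0∞) (hQ : Measurable Q)
    (Φ : ℝ≥0∞ → ℝ≥0∞) (hΦmono : Monotone Φ)
    (hΦconv : ∀ x y : ℝ≥0∞, ∀ a b : ℝ≥0, a + b = 1 →
      Φ (a • x + b • y) ≤ a • Φ x + b • Φ y)
    (hint : (∫⁻ z in Metric.ball (0 : ℂ) 1, Φ (Q z)) < ⊤)
    (δ : ℝ) (hδ : Φ 0 < ENNReal.ofReal δ)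
    (hdiv : (∫⁻ τ in Set.Ioi δ,
        (ENNReal.ofReal τ * PhiInv Φ (ENNReal.ofReal τ))⁻¹) = ⊤) :
    (∫⁻ r in Set.Ioo (0 : ℝ) 1,
        (ENNReal.ofReal r *
          ((∫⁻ θ in Set.Ioo (0 : ℝ) (2 * Real.pi),
              Q ((r : ℂ) * Complex.exp ((θ : ℂ) * Complex.I))) /
            ENNReal.ofReal (2 * Real.pi)))⁻¹) = ⊤ := by
  have hΦmeas : Measurable Φ := hΦmono.measurable
  have hcont : Continuous (fun p : ℝ × ℝ => (p.1 : ℂ) * Complex.exp ((p.2 : ℂ) * Complex.I)) := by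
    apply Continuous.mul
    · exact Complex.continuous_ofReal.comp continuous_fst
    · exact Complex.continuous_exp.comp
        ((Complex.continuous_ofReal.comp continuous_snd).mul continuous_const)
  have hF : Measurable (fun p : ℝ × ℝ => Q ((p.1 : ℂ) * Complex.exp ((p.2 : ℂ) * Complex.I))) :=
    hQ.comp hcont.measurable
  have hexp : ∀ θ : ℝ, Complex.exp (((θ + 2*Real.pi : ℝ) : ℂ) * Complex.I)
      = Complex.exp ((θ:ℂ) * Complex.I) := by
    intro θ
    have he : (((θ + 2*Real.pi : ℝ)) : ℂ) * Complex.I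
        = (θ:ℂ)*Complex.I + 2*(Real.pi:ℂ)*Complex.I := by push_cast; ring
    rw [he, Complex.exp_add, Complex.exp_two_pi_mul_I, mul_one]
  have hA : (∫⁻ r in Set.Ioo (0:ℝ) 1, ENNReal.ofReal r *
      ∫⁻ θ in Set.Ioo (0:ℝ) (2*Real.pi),
        Φ (Q ((r : ℂ) * Complex.exp ((θ : ℂ) * Complex.I)))) < ⊤ := by
    have hball := myLintegral_ball (fun z => Φ (Q z)) (hΦmeas.comp hQ)
    have hstep : ∀ r : ℝ,
        (∫⁻ θ in Set.Ioo (-Real.pi) Real.pi,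
          ENNReal.ofReal r * Φ (Q ((r : ℂ) * Complex.exp ((θ : ℂ) * Complex.I))))
        = ENNReal.ofReal r * ∫⁻ θ in Set.Ioo (0:ℝ) (2*Real.pi),
            Φ (Q ((r : ℂ) * Complex.exp ((θ : ℂ) * Complex.I))) := by
      intro r
      have hmθ : Measurable (fun θ : ℝ => Φ (Q ((r : ℂ) * Complex.exp ((θ : ℂ) * Complex.I)))) := by
        refine hΦmeas.comp (hQ.comp ?_)
        exact (hcont.comp (Continuous.prodMk_right r)).measurable
      rw [lintegral_const_mul _ hmθ]
      congr 1
      refine myShift _ hmθ fun θ => ?_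
      show Φ (Q (↑r * Complex.exp (((θ + 2*Real.pi : ℝ) : ℂ) * Complex.I)))
          = Φ (Q (↑r * Complex.exp ((θ:ℂ) * Complex.I)))
      rw [hexp θ]
    calc (∫⁻ r in Set.Ioo (0:ℝ) 1, ENNReal.ofReal r *
        ∫⁻ θ in Set.Ioo (0:ℝ) (2*Real.pi),
          Φ (Q ((r : ℂ) * Complex.exp ((θ : ℂ) * Complex.I))))
        = ∫⁻ r in Set.Ioo (0:ℝ) 1, ∫⁻ θ in Set.Ioo (-Real.pi) Real.pi,
            ENNReal.ofReal r * Φ (Q ((r : ℂ) * Complex.exp ((θ : ℂ) * Complex.I))) :=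
          (lintegral_congr fun r => (hstep r).symm)
      _ = ∫⁻ z in Metric.ball (0 : ℂ) 1, Φ (Q z) := hball.symm
      _ < ⊤ := hint
  exact helper Φ hΦmono hΦconv _ hF hA δ hδ hdiv
end

section
/- Let (X, μ) be a measure space with finite total measure, let p ∈ (1, ∞), and let φ : X → (0, ∞) be a measurable function. Define I(φ, p) = inf ∫_X φ·α^p dμ, the infimum taken over all measurable functions α : X → [0, ∞] with ∫_X α dμ = 1. Then I(φ, p) = ( ∫_X φ^{−λ} dμ )^{−1/λ}, where λ = 1/(p − 1). -/
open MeasureTheory ENNReal NNReal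

private lemma aux_le {X : Type*} [MeasurableSpace X] (μ : Measure X) (p : ℝ) (hp : 1 < p)
    (φ : X → ℝ≥0∞) (hφm : Measurable φ)
    (hφpos : ∀ x, 0 < φ x) (hφfin : ∀ x, φ x < ⊤)
    (lam : ℝ) (hlam : lam = 1 / (p - 1)) (E : Set X) (hE : MeasurableSet E)
    (hc0 : ∫⁻ x in E, φ x ^ (-lam) ∂μ ≠ 0) (hcT : ∫⁻ x in E, φ x ^ (-lam) ∂μ ≠ ⊤) :
    (⨅ α ∈ {α : X → ℝ≥0∞ | Measurable α ∧ ∫⁻ x, α x ∂μ = 1},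
        ∫⁻ x, φ x * α x ^ p ∂μ) ≤ (∫⁻ x in E, φ x ^ (-lam) ∂μ) ^ (1 - p) := by
  have hp0 : (0:ℝ) < p := by linarith
  have hp1 : (0:ℝ) < p - 1 := by linarith
  set c := ∫⁻ x in E, φ x ^ (-lam) ∂μ with hc
  set α : X → ℝ≥0∞ := fun x => E.indicator (fun y => φ y ^ (-lam)) x * c⁻¹ with hαdef
  have hαm : Measurable α := ((hφm.pow_const _).indicator hE).mul_const _
  have hα1 : ∫⁻ x, α x ∂μ = 1 := by
    rw [hαdef]
    simp only
    rw [lintegral_mul_const' _ _ (by simpa using hc0), lintegral_indicator hE, ← hc,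
      ENNReal.mul_inv_cancel hc0 hcT]
  have hval : ∀ x, φ x * α x ^ p = E.indicator (fun y => φ y ^ (-lam)) x * c⁻¹ ^ p := by
    intro x
    rw [hαdef]
    simp only
    rw [ENNReal.mul_rpow_of_nonneg _ _ hp0.le, ← mul_assoc]
    congr 1
    by_cases hx : x ∈ E
    · rw [Set.indicator_of_mem hx, ← ENNReal.rpow_mul]
      nth_rewrite 1 [← ENNReal.rpow_one (φ x)]
      rw [← ENNReal.rpow_add _ _ (hφpos x).ne' (hφfin x).ne]
      congr 1
      rw [hlam]
      field_simp
      ring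
    · rw [Set.indicator_of_notMem hx, ENNReal.zero_rpow_of_pos hp0, mul_zero]
  refine le_trans (iInf₂_le α ⟨hαm, hα1⟩) (le_of_eq ?_)
  calc ∫⁻ x, φ x * α x ^ p ∂μ
      = ∫⁻ x, E.indicator (fun y => φ y ^ (-lam)) x * c⁻¹ ^ p ∂μ := by
        simp_rw [hval]
    _ = c * c⁻¹ ^ p := by
        rw [lintegral_mul_const' _ _ (by
          simp [Ne, ENNReal.rpow_eq_top_iff, hc0, hcT, hp0, not_lt.mpr hp0.le]),
          lintegral_indicator hE]
    _ = c ^ (1 - p) := by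
        rw [← ENNReal.rpow_neg_one c, ← ENNReal.rpow_mul]
        nth_rewrite 1 [← ENNReal.rpow_one c]
        rw [← ENNReal.rpow_add _ _ hc0 hcT]
        congr 1
        ring

/-- Let `(X, μ)` be a measure space with finite measure, `p ∈ (1, ∞)`, and
`φ : X → (0, ∞)` measurable. Then the infimum of `∫_X φ·α^p dμ` over all measurable
`α : X → [0,∞]` with `∫_X α dμ = 1` equals `(∫_X φ^{−λ} dμ)^{−1/λ}` with `λ = 1/(p−1)`. -/
theorem inf_weighted_integral {X : Type*} [MeasurableSpace X] (μ : Measure X)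
    [IsFiniteMeasure μ] (p : ℝ) (hp : 1 < p)
    (φ : X → ℝ≥0∞) (hφm : Measurable φ)
    (hφpos : ∀ x, 0 < φ x) (hφfin : ∀ x, φ x < ⊤)
    (lam : ℝ) (hlam : lam = 1 / (p - 1)) :
    (⨅ α ∈ {α : X → ℝ≥0∞ | Measurable α ∧ ∫⁻ x, α x ∂μ = 1},
        ∫⁻ x, φ x * α x ^ p ∂μ) =
      (∫⁻ x, φ x ^ (-lam) ∂μ) ^ (-(1 / lam)) := by
  have hp0 : (0:ℝ) < p := by linarith
  have hp1 : (0:ℝ) < p - 1 := by linarith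
  have hlam0 : 0 < lam := by rw [hlam]; positivity
  have h1lam : -(1/lam) = 1 - p := by rw [hlam, one_div_one_div]; ring
  rw [h1lam]
  by_cases hμ : μ = 0
  · subst hμ
    have hset : {α : X → ℝ≥0∞ | Measurable α ∧ ∫⁻ x, α x ∂(0 : Measure X) = 1} = ∅ := by
      ext α; simp
    rw [hset, iInf_emptyset, lintegral_zero_measure,
      ENNReal.zero_rpow_of_neg (by linarith)]
  set J := ∫⁻ x, φ x ^ (-lam) ∂μ with hJdef
  have hmeas : Measurable fun x => φ x ^ (-lam) := hφm.pow_const _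
  have hpt : ∀ x, φ x ^ (-lam) ≠ 0 := fun x => by
    simp [ENNReal.rpow_eq_zero_iff, (hφpos x).ne', (hφfin x).ne, not_lt.mpr hlam0.le,
      neg_neg]
  have hJ0 : J ≠ 0 := by
    rw [hJdef, ← pos_iff_ne_zero, lintegral_pos_iff_support hmeas]
    have hsupp : Function.support (fun x => φ x ^ (-lam)) = Set.univ := by
      ext x; simp [Function.mem_support, hpt x]
    rw [hsupp]
    exact Measure.measure_univ_pos.mpr hμ
  apply le_antisymm
  · -- upper bound
    by_cases hJT : J = ⊤
    · rw [hJT, ENNReal.top_rpow_of_neg (by linarith)]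
      -- show inf ≤ 0 via truncations
      set E : ℕ → Set X := fun n => {x | ((n:ℝ≥0∞))⁻¹ ≤ φ x} with hEdef
      have hEm : ∀ n, MeasurableSet (E n) := fun n =>
        measurableSet_le measurable_const hφm
      set Jn : ℕ → ℝ≥0∞ := fun n => ∫⁻ x in E n, φ x ^ (-lam) ∂μ with hJndef
      have hJnT : ∀ n, Jn n ≠ ⊤ := by
        intro n
        have hbT : ((n:ℝ≥0∞))⁻¹ ^ (-lam) ≠ ⊤ := by
          rw [Ne, ENNReal.rpow_eq_top_iff]
          rintro (⟨h1, _⟩ | ⟨_, h2⟩)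
          · exact (ENNReal.natCast_ne_top n) (ENNReal.inv_eq_zero.mp h1)
          · linarith
        have hb : ∀ x ∈ E n, φ x ^ (-lam) ≤ ((n:ℝ≥0∞))⁻¹ ^ (-lam) := by
          intro x hx
          rw [ENNReal.rpow_neg, ENNReal.rpow_neg]
          exact ENNReal.inv_le_inv' (ENNReal.rpow_le_rpow hx hlam0.le)
        refine ne_top_of_le_ne_top ?_ ((setLIntegral_mono' (hEm n) hb).trans_eq
          (setLIntegral_const _ _))
        exact (ENNReal.mul_lt_top hbT.lt_top (measure_lt_top μ _)).ne
      have hmono : Monotone fun n => (E n).indicator (fun y => φ y ^ (-lam)) := by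
        intro m n hmn
        refine Set.indicator_le_indicator_of_subset ?_ (fun x => zero_le)
        intro x hx
        exact le_trans (ENNReal.inv_le_inv' (by exact_mod_cast Nat.cast_le.mpr hmn)) hx
      have hsup : (⨆ n, Jn n) = ⊤ := by
        have heq : (⨆ n, Jn n) = J := by
          calc ⨆ n, Jn n
              = ⨆ n, ∫⁻ x, (E n).indicator (fun y => φ y ^ (-lam)) x ∂μ := by
                simp_rw [hJndef, lintegral_indicator (hEm _)]
            _ = ∫⁻ x, ⨆ n, (E n).indicator (fun y => φ y ^ (-lam)) x ∂μ :=
                (lintegral_iSup (fun n => hmeas.indicator (hEm n)) hmono).symm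
            _ = J := by
                rw [hJdef]
                congr 1
                ext x
                obtain ⟨n, hn⟩ := ENNReal.exists_inv_nat_lt (hφpos x).ne'
                refine le_antisymm (iSup_le fun m => Set.indicator_le_self _ _ x) ?_
                refine le_iSup_of_le n (le_of_eq ?_)
                rw [Set.indicator_of_mem (by exact hn.le : x ∈ E n)]
        rw [heq, hJT]
      refine ENNReal.le_of_forall_pos_le_add fun ε hε _ => ?_
      rw [zero_add]
      set M : ℝ≥0∞ := (ε : ℝ≥0∞) ^ (1/(1-p)) with hM
      have hMT : M ≠ ⊤ := by
        rw [hM, Ne, ENNReal.rpow_eq_top_iff]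
        rintro (⟨h1, _⟩ | ⟨h1, _⟩)
        · exact (ENNReal.coe_ne_zero.mpr hε.ne') h1
        · exact ENNReal.coe_ne_top h1
      obtain ⟨n, hn⟩ : ∃ n, M < Jn n := lt_iSup_iff.mp (hMT.lt_top.trans_eq hsup.symm)
      have hn0 : Jn n ≠ 0 := (lt_of_le_of_lt (zero_le : 0 ≤ M) hn).ne'
      have h := aux_le μ p hp φ hφm hφpos hφfin lam hlam (E n) (hEm n) hn0 (hJnT n)
      refine h.trans ?_
      have anti : Jn n ^ (1-p) ≤ M ^ (1-p) := by
        rw [show (1-p:ℝ) = -(p-1) by ring, ENNReal.rpow_neg, ENNReal.rpow_neg]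
        exact ENNReal.inv_le_inv' (ENNReal.rpow_le_rpow hn.le (by linarith))
      refine anti.trans (le_of_eq ?_)
      rw [hM, ← ENNReal.rpow_mul, one_div_mul_cancel (by linarith : (1-p:ℝ) ≠ 0),
        ENNReal.rpow_one]
    · -- J finite
      have h := aux_le μ p hp φ hφm hφpos hφfin lam hlam Set.univ MeasurableSet.univ
        (by rwa [setLIntegral_univ]) (by rwa [setLIntegral_univ])
      rwa [setLIntegral_univ] at h
  · -- lower bound (Hölder)
    refine le_iInf₂ fun α hα => ?_
    obtain ⟨hαm, hα1⟩ := hα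
    by_cases hJT : J = ⊤
    · rw [hJT, ENNReal.top_rpow_of_neg (by linarith)]; exact zero_le
    set A := ∫⁻ x, φ x * α x ^ p ∂μ with hA
    have hpq : p.HolderConjugate (p/(p-1)) := Real.HolderConjugate.conjExponent hp
    set q : ℝ := p/(p-1) with hqdef
    have hq0 : (0:ℝ) < q := hpq.symm.pos
    have hf : AEMeasurable (fun x => φ x ^ (1/p) * α x) μ :=
      ((hφm.pow_const _).mul hαm).aemeasurable
    have hg : AEMeasurable (fun x => φ x ^ (-(1/p))) μ := (hφm.pow_const _).aemeasurable
    have hold := ENNReal.lintegral_mul_le_Lp_mul_Lq μ hpq hf hg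
    have e1 : ∀ x, (φ x ^ (1/p) * α x) * φ x ^ (-(1/p)) = α x := by
      intro x
      rw [mul_comm, ← mul_assoc, ← ENNReal.rpow_add _ _ (hφpos x).ne' (hφfin x).ne]
      simp
    have e2 : ∀ x, (φ x ^ (1/p) * α x) ^ p = φ x * α x ^ p := by
      intro x
      rw [ENNReal.mul_rpow_of_nonneg _ _ hp0.le, ← ENNReal.rpow_mul,
        one_div_mul_cancel hp0.ne', ENNReal.rpow_one]
    have e3 : ∀ x, (φ x ^ (-(1/p))) ^ q = φ x ^ (-lam) := by
      intro x
      rw [← ENNReal.rpow_mul]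
      congr 1
      have hq : (1/p) * q = lam := by
        rw [hlam, hqdef, div_mul_div_comm, one_mul,
          div_eq_div_iff (mul_pos hp0 hp1).ne' hp1.ne']
        ring
      rw [neg_mul, hq]
    simp_rw [Pi.mul_apply, e1, e2, e3] at hold
    rw [hα1, ← hA, ← hJdef] at hold
    -- hold : 1 ≤ A ^ (1/p) * J ^ (1/q)
    have hJq0 : J ^ (1/q) ≠ 0 := by
      simp [ENNReal.rpow_eq_zero_iff, hJ0, hJT, not_lt.mpr (by positivity : (0:ℝ) ≤ 1/q)]
    have hJqT : J ^ (1/q) ≠ ⊤ := by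
      simp [Ne, ENNReal.rpow_eq_top_iff, hJ0, hJT, not_lt.mpr (by positivity : (0:ℝ) ≤ 1/q)]
    have h2 : (J ^ (1/q))⁻¹ ≤ A ^ (1/p) := by
      calc (J ^ (1/q))⁻¹ = 1 * (J ^ (1/q))⁻¹ := (one_mul _).symm
        _ ≤ (A ^ (1/p) * J ^ (1/q)) * (J ^ (1/q))⁻¹ := mul_le_mul_left hold _
        _ = A ^ (1/p) := by rw [mul_assoc, ENNReal.mul_inv_cancel hJq0 hJqT, mul_one]
    have h3 := ENNReal.rpow_le_rpow h2 hp0.le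
    rw [← ENNReal.rpow_neg, ← ENNReal.rpow_mul, ← ENNReal.rpow_mul] at h3
    have hexp1 : -(1/q) * p = 1 - p := by rw [hqdef]; field_simp; ring
    have hexp2 : 1/p * p = 1 := one_div_mul_cancel hp0.ne'
    rwa [hexp1, hexp2, ENNReal.rpow_one] at h3
end

section
/- Let (X, μ) be a measure space with finite total measure, let p ∈ (1, ∞), let φ : X → (0, ∞) be measurable, and set λ = 1/(p − 1). Suppose 0 < ∫_X φ^{−λ} dμ < ∞ and set C = ( ∫_X φ^{−λ} dμ )^{−1} and α₀ = C·φ^{−λ}. Then ∫_X α₀ dμ = 1 and ∫_X φ·α₀^p dμ = ( ∫_X φ^{−λ} dμ )^{−1/λ}; moreover, the infimum of ∫_X φ·α^p dμ over all measurable α : X → [0, ∞] with ∫_X α dμ = 1 is attained only at α₀, i.e., any such α with ∫_X φ·α^p dμ = ( ∫_X φ^{−λ} dμ )^{−1/λ} coincides with α₀ μ-almost everywhere. -/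
open MeasureTheory ENNReal NNReal


private lemma conv_eq_aux {p : ℝ} (hp : 1 < p) {a b : ℝ≥0∞} (ha : a ≠ ⊤) (hb : b ≠ ⊤)
    (h : (2⁻¹ * a + 2⁻¹ * b) ^ p = 2⁻¹ * a ^ p + 2⁻¹ * b ^ p) : a = b := by
  by_contra hne
  have hp0 : (0:ℝ) ≤ p := le_of_lt (lt_trans one_pos hp)
  have hAB : a.toReal ≠ b.toReal := fun h' => hne (ENNReal.toReal_eq_toReal_iff' ha hb |>.mp h')
  have hs := (strictConvexOn_rpow hp).2 (Set.mem_Ici.mpr ENNReal.toReal_nonneg)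
    (Set.mem_Ici.mpr ENNReal.toReal_nonneg) hAB (by norm_num : (0:ℝ) < 1/2)
    (by norm_num : (0:ℝ) < 1/2) (by norm_num)
  simp only [smul_eq_mul] at hs
  have hfin1 : a ^ p ≠ ⊤ := ENNReal.rpow_ne_top_of_nonneg hp0 ha
  have hfin2 : b ^ p ≠ ⊤ := ENNReal.rpow_ne_top_of_nonneg hp0 hb
  have hteq := congrArg ENNReal.toReal h
  rw [← ENNReal.toReal_rpow, ENNReal.toReal_add (by finiteness) (by finiteness),
    ENNReal.toReal_add (by finiteness) (by finiteness), ENNReal.toReal_mul, ENNReal.toReal_mul,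
    ENNReal.toReal_mul, ENNReal.toReal_mul, ← ENNReal.toReal_rpow, ← ENNReal.toReal_rpow] at hteq
  have h2r : (2⁻¹ : ℝ≥0∞).toReal = 1/2 := by norm_num
  rw [h2r] at hteq
  linarith [hs, hteq.le, hteq.ge]

private lemma holder_lower_aux {X : Type*} [MeasurableSpace X] (μ : Measure X) (p : ℝ) (hp : 1 < p)
    (φ : X → ℝ≥0∞) (hφm : Measurable φ)
    (hφpos : ∀ x, 0 < φ x) (hφfin : ∀ x, φ x < ⊤)
    (lam : ℝ) (hlam : lam = 1 / (p - 1))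
    (hpos : 0 < ∫⁻ x, φ x ^ (-lam) ∂μ) (hfin : (∫⁻ x, φ x ^ (-lam) ∂μ) < ⊤)
    (γ : X → ℝ≥0∞) (hγm : Measurable γ) (hγ1 : (∫⁻ x, γ x ∂μ) = 1) :
    (∫⁻ x, φ x ^ (-lam) ∂μ) ^ (-(1 / lam)) ≤ ∫⁻ x, φ x * γ x ^ p ∂μ := by
  have hp1 : (0:ℝ) < p - 1 := by linarith
  have hp0 : (0:ℝ) < p := by linarith
  set q := p / (p - 1) with hq
  have hpq : p.HolderConjugate q := Real.HolderConjugate.conjExponent hp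
  set I := ∫⁻ x, φ x ^ (-lam) ∂μ with hI
  have hI0 : I ≠ 0 := hpos.ne'
  have hIt : I ≠ ⊤ := hfin.ne
  set f : X → ℝ≥0∞ := fun x => φ x ^ (1/p) * γ x with hf
  set g : X → ℝ≥0∞ := fun x => φ x ^ (-(1/p)) with hg
  have hfm : Measurable f := (ENNReal.continuous_rpow_const.measurable.comp hφm).mul hγm
  have hgm : Measurable g := ENNReal.continuous_rpow_const.measurable.comp hφm
  have hfg : ∀ x, f x * g x = γ x := by
    intro x
    have : φ x ^ (1/p) * φ x ^ (-(1/p)) = 1 := by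
      rw [← ENNReal.rpow_add _ _ (hφpos x).ne' (hφfin x).ne]
      simp
    calc φ x ^ (1/p) * γ x * φ x ^ (-(1/p)) = φ x ^ (1/p) * φ x ^ (-(1/p)) * γ x := by ring
    _ = γ x := by rw [this, one_mul]
  have hfp : ∀ x, f x ^ p = φ x * γ x ^ p := by
    intro x
    rw [hf, ENNReal.mul_rpow_of_nonneg _ _ hp0.le, ← ENNReal.rpow_mul,
      one_div_mul_cancel hp0.ne', ENNReal.rpow_one]
  have hgq : ∀ x, g x ^ q = φ x ^ (-lam) := by
    intro x
    rw [hg, ← ENNReal.rpow_mul]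
    congr 1
    rw [hlam, hq]; field_simp
  have hol := ENNReal.lintegral_mul_le_Lp_mul_Lq μ hpq hfm.aemeasurable hgm.aemeasurable
  simp only [Pi.mul_apply] at hol
  rw [lintegral_congr hfg, hγ1, lintegral_congr hfp, lintegral_congr hgq, ← hI] at hol
  set J := ∫⁻ x, φ x * γ x ^ p ∂μ with hJ
  have hIq0 : I ^ (1/q) ≠ 0 := by
    simp [ENNReal.rpow_eq_zero_iff, hI0, hIt]
  have hIqt : I ^ (1/q) ≠ ⊤ := by
    simp [ENNReal.rpow_eq_top_iff, hI0, hIt]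
  have h1 : (I ^ (1/q))⁻¹ ≤ J ^ (1/p) := by
    rw [ENNReal.inv_le_iff_le_mul (fun _ => hIq0) (fun h => absurd h hIqt)]
    calc (1:ℝ≥0∞) ≤ J ^ (1/p) * I ^ (1/q) := hol
    _ = I ^ (1/q) * J ^ (1/p) := mul_comm _ _
  have h2 := ENNReal.rpow_le_rpow h1 hp0.le
  rw [← ENNReal.rpow_neg, ← ENNReal.rpow_mul, ← ENNReal.rpow_mul,
    one_div_mul_cancel hp0.ne', ENNReal.rpow_one] at h2
  have hexp : -(1/q) * p = -(1/lam) := by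
    rw [hq, hlam]; field_simp
  rwa [hexp] at h2


/-- Let `(X, μ)` be a finite measure space, `p ∈ (1, ∞)`, `φ : X → (0, ∞)` measurable,
`λ = 1/(p−1)`, and suppose `0 < ∫_X φ^{−λ} dμ < ∞`. With `C = (∫_X φ^{−λ} dμ)⁻¹` and
`α₀ = C·φ^{−λ}`, one has `∫_X α₀ dμ = 1` and `∫_X φ·α₀^p dμ = (∫_X φ^{−λ} dμ)^{−1/λ}`;
moreover the infimum of `∫_X φ·α^p dμ` over measurable `α` with `∫_X α dμ = 1` is attained
only at `α₀`: any such minimizer coincides with `α₀` almost everywhere. -/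
theorem inf_weighted_integral_unique_minimizer {X : Type*} [MeasurableSpace X]
    (μ : Measure X) [IsFiniteMeasure μ] (p : ℝ) (hp : 1 < p)
    (φ : X → ℝ≥0∞) (hφm : Measurable φ)
    (hφpos : ∀ x, 0 < φ x) (hφfin : ∀ x, φ x < ⊤)
    (lam : ℝ) (hlam : lam = 1 / (p - 1))
    (hpos : 0 < ∫⁻ x, φ x ^ (-lam) ∂μ) (hfin : (∫⁻ x, φ x ^ (-lam) ∂μ) < ⊤)
    (C : ℝ≥0∞) (hC : C = (∫⁻ x, φ x ^ (-lam) ∂μ)⁻¹)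
    (α₀ : X → ℝ≥0∞) (hα₀ : α₀ = fun x => C * φ x ^ (-lam)) :
    (∫⁻ x, α₀ x ∂μ = 1) ∧
    (∫⁻ x, φ x * α₀ x ^ p ∂μ = (∫⁻ x, φ x ^ (-lam) ∂μ) ^ (-(1 / lam))) ∧
    (∀ α : X → ℝ≥0∞, Measurable α → (∫⁻ x, α x ∂μ) = 1 →
      (∫⁻ x, φ x * α x ^ p ∂μ) = (∫⁻ x, φ x ^ (-lam) ∂μ) ^ (-(1 / lam)) →
      α =ᵐ[μ] α₀) := by
  have hp1 : (0:ℝ) < p - 1 := by linarith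
  have hp0 : (0:ℝ) < p := by linarith
  have hlam0 : (0:ℝ) < lam := by rw [hlam]; positivity
  set I := ∫⁻ x, φ x ^ (-lam) ∂μ with hI
  have hI0 : I ≠ 0 := hpos.ne'
  have hIt : I ≠ ⊤ := hfin.ne
  have hC0 : C ≠ 0 := by rw [hC]; exact ENNReal.inv_ne_zero.mpr hIt
  have hCt : C ≠ ⊤ := by rw [hC]; exact ENNReal.inv_ne_top.mpr hI0
  have hφl0 : ∀ x, φ x ^ (-lam) ≠ 0 := by
    intro x
    rw [ENNReal.rpow_neg]
    exact ENNReal.inv_ne_zero.mpr (ENNReal.rpow_ne_top_of_nonneg hlam0.le (hφfin x).ne)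
  have hφlt : ∀ x, φ x ^ (-lam) ≠ ⊤ := by
    intro x
    rw [ENNReal.rpow_neg]
    exact ENNReal.inv_ne_top.mpr (ENNReal.rpow_pos (hφpos x) (hφfin x).ne).ne'
  have hφlm : Measurable fun x => φ x ^ (-lam) :=
    ENNReal.continuous_rpow_const.measurable.comp hφm
  have hα₀m : Measurable α₀ := by rw [hα₀]; exact measurable_const.mul hφlm
  have hα₀fin : ∀ x, α₀ x ≠ ⊤ := by
    intro x; rw [hα₀]; exact ENNReal.mul_ne_top hCt (hφlt x)
  -- part 1
  have part1 : ∫⁻ x, α₀ x ∂μ = 1 := by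
    rw [hα₀]
    rw [lintegral_const_mul _ hφlm, ← hI, hC]
    exact ENNReal.inv_mul_cancel hI0 hIt
  -- part 2
  have hpt : ∀ x, φ x * α₀ x ^ p = C ^ p * φ x ^ (-lam) := by
    intro x
    rw [hα₀]
    rw [ENNReal.mul_rpow_of_nonneg _ _ hp0.le, ← ENNReal.rpow_mul]
    have hkey : φ x * φ x ^ (-lam * p) = φ x ^ (-lam) := by
      nth_rewrite 1 [← ENNReal.rpow_one (φ x)]
      rw [← ENNReal.rpow_add _ _ (hφpos x).ne' (hφfin x).ne]
      congr 1
      rw [hlam]; field_simp; ring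
    calc φ x * (C ^ p * φ x ^ (-lam * p)) = C ^ p * (φ x * φ x ^ (-lam * p)) := by ring
    _ = C ^ p * φ x ^ (-lam) := by rw [hkey]
  have hCpI : C ^ p * I = I ^ (-(1/lam)) := by
    rw [hC, ENNReal.inv_rpow]
    rw [← ENNReal.rpow_neg]
    nth_rewrite 2 [← ENNReal.rpow_one I]
    rw [← ENNReal.rpow_add _ _ hI0 hIt]
    congr 1
    rw [hlam]; field_simp; ring
  have part2 : ∫⁻ x, φ x * α₀ x ^ p ∂μ = I ^ (-(1/lam)) := by
    rw [lintegral_congr hpt, lintegral_const_mul _ hφlm, ← hI, hCpI]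
  refine ⟨part1, part2, ?_⟩
  -- part 3 : uniqueness
  intro α hαm hα1 hαJ
  have hmfin : I ^ (-(1/lam)) ≠ ⊤ := by
    rw [ENNReal.rpow_neg]
    exact ENNReal.inv_ne_top.mpr (ENNReal.rpow_pos hpos hIt).ne'
  set β : X → ℝ≥0∞ := fun x => 2⁻¹ * α x + 2⁻¹ * α₀ x with hβ
  have hβm : Measurable β := (measurable_const.mul hαm).add (measurable_const.mul hα₀m)
  have hβ1 : ∫⁻ x, β x ∂μ = 1 := by
    rw [hβ]
    rw [lintegral_add_left (hαm.const_mul 2⁻¹),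
      lintegral_const_mul _ hαm, lintegral_const_mul _ hα₀m, hα1, part1]
    simp [ENNReal.inv_two_add_inv_two]
  -- pointwise convexity inequality
  have hptle : ∀ x, φ x * β x ^ p ≤ 2⁻¹ * (φ x * α x ^ p) + 2⁻¹ * (φ x * α₀ x ^ p) := by
    intro x
    have := ENNReal.rpow_arith_mean_le_arith_mean2_rpow 2⁻¹ 2⁻¹ (α x) (α₀ x)
      ENNReal.inv_two_add_inv_two hp.le
    calc φ x * β x ^ p ≤ φ x * (2⁻¹ * α x ^ p + 2⁻¹ * α₀ x ^ p) :=
      mul_le_mul_right this _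
    _ = 2⁻¹ * (φ x * α x ^ p) + 2⁻¹ * (φ x * α₀ x ^ p) := by ring
  have hφαm : Measurable fun x => φ x * α x ^ p :=
    hφm.mul (ENNReal.continuous_rpow_const.measurable.comp hαm)
  have hφα₀m : Measurable fun x => φ x * α₀ x ^ p :=
    hφm.mul (ENNReal.continuous_rpow_const.measurable.comp hα₀m)
  have hRHSm : Measurable fun x => 2⁻¹ * (φ x * α x ^ p) + 2⁻¹ * (φ x * α₀ x ^ p) :=
    (measurable_const.mul hφαm).add (measurable_const.mul hφα₀m)
  have hRint : ∫⁻ x, (2⁻¹ * (φ x * α x ^ p) + 2⁻¹ * (φ x * α₀ x ^ p)) ∂μ = I ^ (-(1/lam)) := by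
    rw [lintegral_add_left (hφαm.const_mul 2⁻¹),
      lintegral_const_mul _ hφαm, lintegral_const_mul _ hφα₀m, hαJ, part2]
    rw [← add_mul, ENNReal.inv_two_add_inv_two, one_mul]
  have hLlow : I ^ (-(1/lam)) ≤ ∫⁻ x, φ x * β x ^ p ∂μ :=
    holder_lower_aux μ p hp φ hφm hφpos hφfin lam hlam hpos hfin β hβm hβ1
  have hLhigh : ∫⁻ x, φ x * β x ^ p ∂μ ≤ I ^ (-(1/lam)) := by
    rw [← hRint]
    exact lintegral_mono hptle
  have hLeq : ∫⁻ x, φ x * β x ^ p ∂μ = I ^ (-(1/lam)) := le_antisymm hLhigh hLlow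
  -- a.e. equality of integrands
  have haeq : (fun x => φ x * β x ^ p)
      =ᵐ[μ] fun x => 2⁻¹ * (φ x * α x ^ p) + 2⁻¹ * (φ x * α₀ x ^ p) := by
    refine ae_eq_of_ae_le_of_lintegral_le (Filter.Eventually.of_forall hptle) ?_
      hRHSm.aemeasurable ?_
    · rw [hLeq]; exact hmfin
    · rw [hRint, hLeq]
  -- α finite a.e.
  have hαfin : ∀ᵐ x ∂μ, φ x * α x ^ p < ⊤ := ae_lt_top hφαm (by rw [hαJ]; exact hmfin)
  filter_upwards [haeq, hαfin] with x hx hxf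
  -- cancel φ x
  have hαxf : α x ≠ ⊤ := by
    by_contra hT
    rw [hT, ENNReal.top_rpow_of_pos hp0, ENNReal.mul_top (hφpos x).ne'] at hxf
    exact absurd hxf (lt_irrefl _)
  have hx' : φ x * β x ^ p = φ x * (2⁻¹ * α x ^ p + 2⁻¹ * α₀ x ^ p) := by
    rw [hx]; ring
  have hcancel : β x ^ p = 2⁻¹ * α x ^ p + 2⁻¹ * α₀ x ^ p :=
    (ENNReal.mul_right_inj (hφpos x).ne' (hφfin x).ne).mp hx'
  exact conv_eq_aux hp hαxf (hα₀fin x) hcancel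
end

section
/- Let D be a domain in ℂ, let μ : D → ℂ be measurable with |μ(z)| < 1 almost everywhere, let z₀ ∈ ℂ lie in the closure of D, and let 0 < ε < ε₀ < sup_{z∈D} |z − z₀|. Extend K^T_μ(·, z₀) by zero outside D and, for r > 0, set ‖K^T_μ‖₁(z₀, r) = r·∫_0^{2π} K^T_μ(z₀ + r·e^{iθ}, z₀) dθ. Assume ‖K^T_μ‖₁(z₀, r) ≠ ∞ for almost every r ∈ (ε, ε₀), and set I = ∫_ε^{ε₀} dr / ‖K^T_μ‖₁(z₀, r). Then for every measurable function η : (ε, ε₀) → [0, ∞] with ∫_ε^{ε₀} η(r) dr = 1, one has ∫_{A ∩ D} K^T_μ(z, z₀)·η(|z − z₀|)² dm(z) ≥ I⁻¹, where A = {z ∈ ℂ : ε < |z − z₀| < ε₀} and I⁻¹ is understood as 0 when I = ∞. -/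
open MeasureTheory ENNReal NNReal

/-- The tangent dilatation `K^T_μ(z, z₀) = |1 − (conj(z−z₀)/(z−z₀))·μ(z)|² / (1 − |μ(z)|²)`
of a Beltrami coefficient `μf` on `D`, extended by zero outside `D`, with the conventions
`a/0 = ∞` for `a > 0` and `0·∞ = 0` (realized via extended nonnegative reals). -/
noncomputable def tangentDilatation (D : Set ℂ) (μf : ℂ → ℂ) (z₀ z : ℂ) : ℝ≥0∞ :=
  Set.indicator D
    (fun w =>
      ENNReal.ofReal (‖1 - ((starRingEnd ℂ) (w - z₀) / (w - z₀)) * μf w‖ ^ 2) /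
        ENNReal.ofReal (1 - ‖μf w‖ ^ 2)) z

/-- `‖K^T_μ‖₁(z₀, r) = r·∫_0^{2π} K^T_μ(z₀ + r·e^{iθ}, z₀) dθ`, the `L¹`-norm of the
tangent dilatation (extended by zero outside `D`) over the circle of radius `r` about `z₀`. -/
noncomputable def circleNormKT (D : Set ℂ) (μf : ℂ → ℂ) (z₀ : ℂ) (r : ℝ) : ℝ≥0∞ :=
  ENNReal.ofReal r *
    ∫⁻ θ in Set.Ioo (0 : ℝ) (2 * Real.pi),
      tangentDilatation D μf z₀ (z₀ + (r : ℂ) * Complex.exp ((θ : ℂ) * Complex.I))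

section aux

open Real Set

theorem my_lintegral_polar (f : ℝ × ℝ → ℝ≥0∞) :
    (∫⁻ p in polarCoord.target, ENNReal.ofReal p.1 * f (polarCoord.symm p)) = ∫⁻ p, f p := by
  set B : ℝ × ℝ → ℝ × ℝ →L[ℝ] ℝ × ℝ := fun p =>
    LinearMap.toContinuousLinearMap (Matrix.toLin (Module.Basis.finTwoProd ℝ) (Module.Basis.finTwoProd ℝ)
      !![Real.cos p.2, -p.1 * Real.sin p.2; Real.sin p.2, p.1 * Real.cos p.2])
  have A : ∀ p ∈ polarCoord.target, HasFDerivWithinAt polarCoord.symm (B p) polarCoord.target p :=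
    fun p _ => (hasFDerivAt_polarCoord_symm p).hasFDerivWithinAt
  have B_det : ∀ p, (B p).det = p.1 := by
    intro p
    conv_rhs => rw [← one_mul p.1, ← Real.cos_sq_add_sin_sq p.2]
    simp only [B, neg_mul, LinearMap.det_toContinuousLinearMap, LinearMap.det_toLin,
      Matrix.det_fin_two_of, sub_neg_eq_add]
    ring
  symm
  calc
    ∫⁻ p, f p = ∫⁻ p in polarCoord.source, f p := by
      rw [← setLIntegral_univ]
      exact setLIntegral_congr polarCoord_source_ae_eq_univ.symm
    _ = ∫⁻ p in polarCoord.target, ENNReal.ofReal |(B p).det| * f (polarCoord.symm p) := by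
      rw [← polarCoord.symm_image_target_eq_source]
      exact lintegral_image_eq_lintegral_abs_det_fderiv_mul volume
        polarCoord.open_target.measurableSet A
        (polarCoord.symm.injOn) f
    _ = _ := by
      refine setLIntegral_congr_fun_ae polarCoord.open_target.measurableSet
        (Filter.Eventually.of_forall fun p hp => ?_)
      rw [B_det, abs_of_pos hp.1]

theorem my_lintegral_polar_complex (f : ℂ → ℝ≥0∞) :
    (∫⁻ p in polarCoord.target, ENNReal.ofReal p.1 * f (Complex.polarCoord.symm p)) =
      ∫⁻ z, f z := by
  rw [(Complex.volume_preserving_equiv_real_prod.symm).lintegral_map_equiv f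
    Complex.measurableEquivRealProd.symm, ← my_lintegral_polar]
  rfl

theorem my_lintegral_periodic (h : ℝ → ℝ≥0∞) (hm : Measurable h)
    (hper : ∀ θ : ℝ, h (θ + 2 * π) = h θ) :
    ∫⁻ θ in Ioo (-π) π, h θ = ∫⁻ θ in Ioo 0 (2 * π), h θ := by
  have pi_pos := Real.pi_pos
  have e1 : Ioo (-π) π = Ioc (-π) (0:ℝ) ∪ Ioo 0 π :=
    (Set.Ioc_union_Ioo_eq_Ioo (by linarith) pi_pos).symm
  have e2 : Ioo (0:ℝ) (2*π) = Ioc 0 π ∪ Ioo π (2*π) :=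
    (Set.Ioc_union_Ioo_eq_Ioo (by linarith) (by linarith)).symm
  have d1 : Disjoint (Ioc (-π) (0:ℝ)) (Ioo 0 π) := by
    refine Set.disjoint_left.2 fun x hx hx' => ?_
    exact absurd hx.2 (not_le.2 hx'.1)
  have d2 : Disjoint (Ioc (0:ℝ) π) (Ioo π (2*π)) := by
    refine Set.disjoint_left.2 fun x hx hx' => ?_
    exact absurd hx.2 (not_le.2 hx'.1)
  have shift : ∫⁻ θ in Ioo π (2*π), h θ = ∫⁻ θ in Ioo (-π) 0, h θ := by
    have hset : (· + 2*π) ⁻¹' Ioo π (2*π) = Ioo (-π) (0:ℝ) := by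
      ext x
      simp only [Set.mem_preimage, Set.mem_Ioo]
      constructor <;> intro hx <;> constructor <;> linarith [hx.1, hx.2]
    have hmap : Measure.map (· + 2*π) (volume.restrict (Ioo (-π) 0)) =
        volume.restrict (Ioo π (2*π)) := by
      rw [← hset, ← Measure.restrict_map (measurable_add_const (2*π)) measurableSet_Ioo,
        Measure.IsAddRightInvariant.map_add_right_eq_self]
    rw [← hmap, lintegral_map hm (measurable_add_const (2*π))]
    exact lintegral_congr fun θ => hper θ
  rw [e1, e2, lintegral_union measurableSet_Ioo d1, lintegral_union measurableSet_Ioo d2,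
    setLIntegral_congr (Ioo_ae_eq_Ioc (α := ℝ) (a := (0:ℝ)) (b := π)).symm, shift,
    setLIntegral_congr (Ioo_ae_eq_Ioc (α := ℝ) (a := -π) (b := (0:ℝ)))]
  ring

end aux

/-- Lower bound for ring integrals of the tangent dilatation: for every measurable
`η : (ε, ε₀) → [0,∞]` with `∫_ε^{ε₀} η(r) dr = 1`,
`∫_{A∩D} K^T_μ(z,z₀)·η(|z−z₀|)² dm(z) ≥ I⁻¹`, where
`I = ∫_ε^{ε₀} dr/‖K^T_μ‖₁(z₀,r)` and `A = {ε < |z−z₀| < ε₀}`. -/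
theorem ring_integral_lower_bound (D : Set ℂ) (hD : IsOpen D) (hDconn : IsConnected D)
    (μf : ℂ → ℂ) (hμm : Measurable μf)
    (hμ : ∀ᵐ z ∂(volume : Measure ℂ), z ∈ D → ‖μf z‖ < 1)
    (z₀ : ℂ) (hz₀ : z₀ ∈ closure D)
    (ε ε₀ : ℝ) (hε : 0 < ε) (hεε₀ : ε < ε₀)
    (hε₀ : ENNReal.ofReal ε₀ < ⨆ z ∈ D, edist z z₀)
    (hfin : ∀ᵐ r ∂(volume.restrict (Set.Ioo ε ε₀)), circleNormKT D μf z₀ r ≠ ⊤)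
    (I : ℝ≥0∞) (hI : I = ∫⁻ r in Set.Ioo ε ε₀, (circleNormKT D μf z₀ r)⁻¹)
    (η : ℝ → ℝ≥0∞) (hηm : Measurable η)
    (hη1 : (∫⁻ r in Set.Ioo ε ε₀, η r) = 1) :
    I⁻¹ ≤ ∫⁻ z in ({z : ℂ | ε < dist z z₀ ∧ dist z z₀ < ε₀} ∩ D),
      tangentDilatation D μf z₀ z * (η (dist z z₀)) ^ 2 := by
  classical
  set π := Real.pi
  set T : ℂ → ℝ≥0∞ := tangentDilatation D μf z₀ with hT
  set K : ℝ → ℝ≥0∞ := circleNormKT D μf z₀ with hK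
  have hTm : Measurable T := by
    rw [hT]; unfold tangentDilatation
    apply Measurable.indicator _ hD.measurableSet
    apply Measurable.div
    · apply ENNReal.measurable_ofReal.comp
      apply Measurable.pow_const
      apply continuous_norm.measurable.comp
      exact measurable_const.sub
        (((((Complex.continuous_conj.measurable).comp (measurable_id.sub_const z₀)).div
          (measurable_id.sub_const z₀))).mul hμm)
    · exact ENNReal.measurable_ofReal.comp
        (measurable_const.sub ((continuous_norm.measurable.comp hμm).pow_const 2))
  set g : ℂ → ℝ≥0∞ := fun z => T z * (η (dist z z₀)) ^ 2 with hg
  have hgm : Measurable g :=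
    hTm.mul ((hηm.comp (continuous_id.dist continuous_const).measurable).pow_const 2)
  set A : Set ℂ := {z : ℂ | ε < dist z z₀ ∧ dist z z₀ < ε₀} with hA
  have hAm : MeasurableSet A := by
    apply MeasurableSet.inter
    · exact measurableSet_lt measurable_const (continuous_id.dist continuous_const).measurable
    · exact measurableSet_lt (continuous_id.dist continuous_const).measurable measurable_const
  -- the circle map, measurability in both variables
  have hcm : Measurable (fun p : ℝ × ℝ =>
      T (z₀ + (p.1 : ℂ) * Complex.exp ((p.2 : ℂ) * Complex.I))) := by
    apply hTm.comp
    apply Continuous.measurable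
    exact continuous_const.add ((Complex.continuous_ofReal.comp continuous_fst).mul
      (Complex.continuous_exp.comp
        ((Complex.continuous_ofReal.comp continuous_snd).mul continuous_const)))
  have hKm : Measurable K := by
    rw [hK]; unfold circleNormKT
    exact (ENNReal.measurable_ofReal).mul (Measurable.lintegral_prod_right' hcm)
  -- Step A : polar coordinates computation
  have stepA : (∫⁻ z in A ∩ D, g z) = ∫⁻ r in Set.Ioo ε ε₀, (η r) ^ 2 * K r := by
    have hgz : ∀ z ∉ D, g z = 0 := by
      intro z hz
      simp [hg, hT, tangentDilatation, Set.indicator_of_notMem hz]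
    have hind : D.indicator g = g := by
      funext z
      by_cases hz : z ∈ D
      · rw [Set.indicator_of_mem hz]
      · rw [Set.indicator_of_notMem hz, hgz z hz]
    have e1 : (∫⁻ z in A ∩ D, g z) = ∫⁻ z in A, g z := by
      calc ∫⁻ z in A ∩ D, g z = ∫⁻ z in D, g z ∂(volume.restrict A) := by
            rw [Measure.restrict_restrict hD.measurableSet, Set.inter_comm]
      _ = ∫⁻ z, D.indicator g z ∂(volume.restrict A) := by
            rw [lintegral_indicator hD.measurableSet]
      _ = ∫⁻ z in A, g z := by rw [hind]
    have hFm : Measurable (A.indicator g) := hgm.indicator hAm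
    have e3 : (∫⁻ z, A.indicator g z) = ∫⁻ w, A.indicator g (z₀ + w) :=
      ((measurePreserving_add_left (volume : Measure ℂ) z₀).lintegral_comp hFm).symm
    set S : Set (ℝ × ℝ) := Set.Ioo ε ε₀ ×ˢ (Set.univ : Set ℝ) with hS
    have hSm : MeasurableSet S := measurableSet_Ioo.prod MeasurableSet.univ
    have habs : ∀ p : ℝ × ℝ, 0 < p.1 → dist (z₀ + Complex.polarCoord.symm p) z₀ = p.1 := by
      intro p hp
      rw [Complex.dist_eq, add_sub_cancel_left, Complex.norm_polarCoord_symm, abs_of_pos hp]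
    have key5 : ∀ p ∈ polarCoord.target,
        ENNReal.ofReal p.1 * A.indicator g (z₀ + Complex.polarCoord.symm p) =
          S.indicator (fun p => ENNReal.ofReal p.1 * g (z₀ + Complex.polarCoord.symm p)) p := by
      intro p hp
      have hd := habs p hp.1
      by_cases hr : p.1 ∈ Set.Ioo ε ε₀
      · have h1 : z₀ + Complex.polarCoord.symm p ∈ A := by
          simp only [hA, Set.mem_setOf_eq, hd]
          exact ⟨hr.1, hr.2⟩
        have h2 : p ∈ S := Set.mem_prod.2 ⟨hr, Set.mem_univ _⟩
        rw [Set.indicator_of_mem h1, Set.indicator_of_mem h2]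
      · have h1 : z₀ + Complex.polarCoord.symm p ∉ A := by
          simp only [hA, Set.mem_setOf_eq, hd]
          exact fun h => hr (Set.mem_Ioo.2 h)
        have h2 : p ∉ S := fun h => hr (Set.mem_prod.1 h).1
        rw [Set.indicator_of_notMem h1, Set.indicator_of_notMem h2, mul_zero]
    have hSet : S ∩ polarCoord.target = Set.Ioo ε ε₀ ×ˢ Set.Ioo (-π) π := by
      have hIoo : Set.Ioo ε ε₀ ∩ Set.Ioi 0 = Set.Ioo ε ε₀ :=
        Set.inter_eq_left.2 (fun x hx => lt_trans hε hx.1)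
      rw [polarCoord_target, hS, Set.prod_inter_prod, Set.univ_inter, hIoo]
    have e5 : (∫⁻ p in polarCoord.target,
          ENNReal.ofReal p.1 * A.indicator g (z₀ + Complex.polarCoord.symm p)) =
        ∫⁻ p in Set.Ioo ε ε₀ ×ˢ Set.Ioo (-π) π,
          ENNReal.ofReal p.1 * g (z₀ + Complex.polarCoord.symm p) := by
      rw [setLIntegral_congr_fun_ae polarCoord.open_target.measurableSet
        (Filter.Eventually.of_forall key5), lintegral_indicator hSm,
        Measure.restrict_restrict hSm, hSet]
    have hcont : Continuous fun p : ℝ × ℝ => z₀ + Complex.polarCoord.symm p := by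
      simp only [Complex.polarCoord_symm_apply]
      exact continuous_const.add ((Complex.continuous_ofReal.comp continuous_fst).mul
        ((Complex.continuous_ofReal.comp (Real.continuous_cos.comp continuous_snd)).add
          ((Complex.continuous_ofReal.comp (Real.continuous_sin.comp continuous_snd)).mul
            continuous_const)))
    have hF2m : Measurable fun p : ℝ × ℝ =>
        ENNReal.ofReal p.1 * g (z₀ + Complex.polarCoord.symm p) :=
      (ENNReal.measurable_ofReal.comp measurable_fst).mul (hgm.comp hcont.measurable)
    have hprod : (volume : Measure (ℝ × ℝ)).restrict (Set.Ioo ε ε₀ ×ˢ Set.Ioo (-π) π) =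
        (volume.restrict (Set.Ioo ε ε₀)).prod (volume.restrict (Set.Ioo (-π) π)) := by
      rw [Measure.prod_restrict, ← Measure.volume_eq_prod]
    have e6 : (∫⁻ p in Set.Ioo ε ε₀ ×ˢ Set.Ioo (-π) π,
          ENNReal.ofReal p.1 * g (z₀ + Complex.polarCoord.symm p)) =
        ∫⁻ r in Set.Ioo ε ε₀, ∫⁻ θ in Set.Ioo (-π) π,
          ENNReal.ofReal r * g (z₀ + Complex.polarCoord.symm (r, θ)) := by
      rw [hprod]
      exact lintegral_prod _ hF2m.aemeasurable
    have e7 : (∫⁻ r in Set.Ioo ε ε₀, ∫⁻ θ in Set.Ioo (-π) π,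
          ENNReal.ofReal r * g (z₀ + Complex.polarCoord.symm (r, θ))) =
        ∫⁻ r in Set.Ioo ε ε₀, (η r) ^ 2 * K r := by
      refine setLIntegral_congr_fun_ae measurableSet_Ioo
        (Filter.Eventually.of_forall fun r hr => ?_)
      have hr0 : 0 < r := lt_trans hε hr.1
      have hw : ∀ θ : ℝ, Complex.polarCoord.symm (r, θ) =
          (r : ℂ) * Complex.exp ((θ : ℂ) * Complex.I) := by
        intro θ
        rw [Complex.polarCoord_symm_apply, Complex.exp_mul_I]
        simp [Complex.ofReal_cos, Complex.ofReal_sin]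
      have hdist : ∀ θ : ℝ,
          dist (z₀ + (r : ℂ) * Complex.exp ((θ : ℂ) * Complex.I)) z₀ = r := by
        intro θ
        rw [Complex.dist_eq, add_sub_cancel_left, norm_mul, Complex.norm_real, Real.norm_eq_abs,
          Complex.norm_exp_ofReal_mul_I, mul_one, abs_of_pos hr0]
      have hmeas : Measurable fun θ : ℝ =>
          T (z₀ + (r : ℂ) * Complex.exp ((θ : ℂ) * Complex.I)) :=
        hcm.comp (measurable_const.prodMk measurable_id)
      have hper : ∀ θ : ℝ,
          T (z₀ + (r : ℂ) * Complex.exp (((θ + 2 * π : ℝ) : ℂ) * Complex.I)) =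
            T (z₀ + (r : ℂ) * Complex.exp ((θ : ℂ) * Complex.I)) := by
        intro θ
        have hc : (((θ + 2 * π : ℝ) : ℂ)) * Complex.I =
            (θ : ℂ) * Complex.I + 2 * (π : ℂ) * Complex.I := by
          push_cast; ring
        rw [hc, Complex.exp_add, Complex.exp_two_pi_mul_I, mul_one]
      calc (∫⁻ θ in Set.Ioo (-π) π,
            ENNReal.ofReal r * g (z₀ + Complex.polarCoord.symm (r, θ)))
          = ∫⁻ θ in Set.Ioo (-π) π, (ENNReal.ofReal r * η r ^ 2) *
              T (z₀ + (r : ℂ) * Complex.exp ((θ : ℂ) * Complex.I)) := by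
            refine setLIntegral_congr_fun_ae measurableSet_Ioo
              (Filter.Eventually.of_forall fun θ _ => ?_)
            rw [hw θ]
            simp only [hg]
            rw [hdist θ]
            ring
        _ = (ENNReal.ofReal r * η r ^ 2) * ∫⁻ θ in Set.Ioo (-π) π,
              T (z₀ + (r : ℂ) * Complex.exp ((θ : ℂ) * Complex.I)) :=
            lintegral_const_mul _ hmeas
        _ = (ENNReal.ofReal r * η r ^ 2) * ∫⁻ θ in Set.Ioo 0 (2 * π),
              T (z₀ + (r : ℂ) * Complex.exp ((θ : ℂ) * Complex.I)) := by
            rw [my_lintegral_periodic _ hmeas hper]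
        _ = (η r) ^ 2 * K r := by
            simp only [hK, circleNormKT]
            ring
    calc (∫⁻ z in A ∩ D, g z) = ∫⁻ z in A, g z := e1
      _ = ∫⁻ z, A.indicator g z := by rw [lintegral_indicator hAm]
      _ = ∫⁻ w, A.indicator g (z₀ + w) := e3
      _ = ∫⁻ p in polarCoord.target,
            ENNReal.ofReal p.1 * A.indicator g (z₀ + Complex.polarCoord.symm p) :=
          (my_lintegral_polar_complex _).symm
      _ = ∫⁻ p in Set.Ioo ε ε₀ ×ˢ Set.Ioo (-π) π,
            ENNReal.ofReal p.1 * g (z₀ + Complex.polarCoord.symm p) := e5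
      _ = ∫⁻ r in Set.Ioo ε ε₀, ∫⁻ θ in Set.Ioo (-π) π,
            ENNReal.ofReal r * g (z₀ + Complex.polarCoord.symm (r, θ)) := e6
      _ = ∫⁻ r in Set.Ioo ε ε₀, (η r) ^ 2 * K r := e7
  rw [stepA]
  -- Step B : Cauchy-Schwarz
  set RHS : ℝ≥0∞ := ∫⁻ r in Set.Ioo ε ε₀, (η r) ^ 2 * K r with hRHS
  by_cases hItop : I = ⊤
  · simp [hItop]
  · set ν : Measure ℝ := volume.restrict (Set.Ioo ε ε₀) with hν
    have hIne : (∫⁻ r, (K r)⁻¹ ∂ν) ≠ ⊤ := by rw [← hI]; exact hItop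
    have hK0 : ∀ᵐ r ∂ν, K r ≠ 0 := by
      filter_upwards [ae_lt_top hKm.inv hIne] with r hr
      exact (ENNReal.inv_lt_top.mp hr).ne'
    set φ : ℝ → ℝ≥0∞ := fun r => η r * (K r) ^ (1/2 : ℝ) with hφ
    set ψ : ℝ → ℝ≥0∞ := fun r => ((K r)⁻¹) ^ (1/2 : ℝ) with hψ
    have hφm : AEMeasurable φ ν := (hηm.mul (hKm.pow_const _)).aemeasurable
    have hψm : AEMeasurable ψ ν := (hKm.inv.pow_const _).aemeasurable
    have hconj : Real.HolderConjugate 2 2 := Real.HolderConjugate.two_two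
    have key := ENNReal.lintegral_mul_le_Lp_mul_Lq ν hconj hφm hψm
    have hfg : ∀ᵐ r ∂ν, (φ * ψ) r = η r := by
      filter_upwards [hK0, hfin] with r h0 htop
      have h1 : (K r) ^ (1/2 : ℝ) * ((K r)⁻¹) ^ (1/2 : ℝ) = 1 := by
        rw [ENNReal.inv_rpow, ENNReal.mul_inv_cancel]
        · simp [ENNReal.rpow_eq_zero_iff, h0, htop]
        · exact ENNReal.rpow_ne_top_of_nonneg (by norm_num) htop
      simp only [Pi.mul_apply, hφ, hψ]
      rw [mul_assoc, h1, mul_one]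
    have hone : (1 : ℝ≥0∞) ≤ (∫⁻ r, φ r ^ (2:ℝ) ∂ν) ^ (1/2 : ℝ) *
        (∫⁻ r, ψ r ^ (2:ℝ) ∂ν) ^ (1/2 : ℝ) := by
      calc (1 : ℝ≥0∞) = ∫⁻ r, (φ * ψ) r ∂ν := by rw [lintegral_congr_ae hfg, ← hη1]
      _ ≤ _ := key
    have hφ2 : ∀ r, φ r ^ (2:ℝ) = η r ^ 2 * K r := by
      intro r
      rw [hφ, ENNReal.mul_rpow_of_nonneg _ _ (by norm_num : (0:ℝ) ≤ 2),
        ← ENNReal.rpow_natCast (η r) 2, ← ENNReal.rpow_mul]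
      norm_num
    have hψ2 : ∀ r, ψ r ^ (2:ℝ) = (K r)⁻¹ := by
      intro r
      rw [hψ, ← ENNReal.rpow_mul]
      norm_num
    simp only [hφ2, hψ2] at hone
    rw [← hRHS, ← hI] at hone
    have hsq : (1 : ℝ≥0∞) ≤ RHS * I := by
      calc (1 : ℝ≥0∞) = 1 * 1 := (one_mul 1).symm
      _ ≤ (RHS ^ (1/2:ℝ) * I ^ (1/2:ℝ)) * (RHS ^ (1/2:ℝ) * I ^ (1/2:ℝ)) :=
          mul_le_mul' hone hone
      _ = (RHS ^ (1/2:ℝ) * RHS ^ (1/2:ℝ)) * (I ^ (1/2:ℝ) * I ^ (1/2:ℝ)) := by ring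
      _ = RHS * I := by
          rw [← ENNReal.rpow_add_of_nonneg _ _ (by norm_num) (by norm_num),
            ← ENNReal.rpow_add_of_nonneg _ _ (by norm_num) (by norm_num)]
          norm_num
    have hI0 : I ≠ 0 := by
      intro h0
      rw [h0, mul_zero] at hsq
      exact (by simp : ¬ ((1:ℝ≥0∞) ≤ 0)) hsq
    calc I⁻¹ = 1 * I⁻¹ := (one_mul _).symm
    _ ≤ (RHS * I) * I⁻¹ := mul_le_mul_left hsq _
    _ = RHS * (I * I⁻¹) := by ring
    _ = RHS := by rw [ENNReal.mul_inv_cancel hI0 hItop, mul_one]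
end

section
/- Let D be a domain in ℂ, let μ : D → ℂ be measurable with |μ(z)| < 1 almost everywhere, let z₀ ∈ ℂ lie in the closure of D, and let 0 < ε < ε₀ < sup_{z∈D} |z − z₀|. Extend K^T_μ(·, z₀) by zero outside D and, for r > 0, set ‖K^T_μ‖₁(z₀, r) = r·∫_0^{2π} K^T_μ(z₀ + r·e^{iθ}, z₀) dθ. Assume ‖K^T_μ‖₁(z₀, r) ≠ ∞ for almost every r ∈ (ε, ε₀), and suppose I = ∫_ε^{ε₀} dr / ‖K^T_μ‖₁(z₀, r) satisfies 0 < I < ∞. Define η₀(r) = 1/(I·‖K^T_μ‖₁(z₀, r)) for r ∈ (ε, ε₀). Then ∫_ε^{ε₀} η₀(r) dr = 1 and ∫_{A ∩ D} K^T_μ(z, z₀)·η₀(|z − z₀|)² dm(z) = I⁻¹, where A = {z ∈ ℂ : ε < |z − z₀| < ε₀}. -/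
open MeasureTheory ENNReal NNReal

open Set in
private lemma tangentDilatation_measurable (D : Set ℂ) (hD : IsOpen D) (μf : ℂ → ℂ)
    (hμm : Measurable μf) (z₀ : ℂ) : Measurable (tangentDilatation D μf z₀) := by
  unfold tangentDilatation
  apply Measurable.indicator _ hD.measurableSet
  have habs : Measurable (fun z : ℂ => ‖z‖) := continuous_norm.measurable
  have h1 : Measurable fun w : ℂ => 1 - ((starRingEnd ℂ) (w - z₀) / (w - z₀)) * μf w :=
    measurable_const.sub
      ((((Complex.continuous_conj.measurable).comp (measurable_id.sub measurable_const)).div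
        (measurable_id.sub measurable_const)).mul hμm)
  exact (ENNReal.measurable_ofReal.comp ((habs.comp h1).pow_const 2)).div
    (ENNReal.measurable_ofReal.comp (measurable_const.sub ((habs.comp hμm).pow_const 2)))

private lemma polarMap_continuous (z₀ : ℂ) :
    Continuous fun p : ℝ × ℝ => z₀ + (p.1 : ℂ) * Complex.exp ((p.2 : ℂ) * Complex.I) :=
  continuous_const.add ((Complex.continuous_ofReal.comp continuous_fst).mul
    (Complex.continuous_exp.comp ((Complex.continuous_ofReal.comp continuous_snd).mul
      continuous_const)))

private lemma circleNormKT_measurable (D : Set ℂ) (hD : IsOpen D) (μf : ℂ → ℂ)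
    (hμm : Measurable μf) (z₀ : ℂ) : Measurable (circleNormKT D μf z₀) := by
  unfold circleNormKT
  apply Measurable.mul ENNReal.measurable_ofReal
  exact Measurable.lintegral_prod_right'
    ((tangentDilatation_measurable D hD μf hμm z₀).comp (polarMap_continuous z₀).measurable)

open Set Real in
private lemma lintegral_annulus (z₀ : ℂ) {ε ε₀ : ℝ} (hε : 0 < ε) (hεε₀ : ε < ε₀)
    (g : ℂ → ℝ≥0∞) (hg : Measurable g) :
    ∫⁻ z in {z : ℂ | ε < dist z z₀ ∧ dist z z₀ < ε₀}, g z =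
    ∫⁻ p in Set.Ioo ε ε₀ ×ˢ Set.Ioo 0 (2 * π),
      ENNReal.ofReal p.1 * g (z₀ + (p.1 : ℂ) * Complex.exp ((p.2 : ℂ) * Complex.I)) := by
  set A : Set ℂ := {z : ℂ | ε < dist z z₀ ∧ dist z z₀ < ε₀} with hA
  set s : Set (ℝ × ℝ) := Set.Ioo ε ε₀ ×ˢ Set.Ioo 0 (2 * π) with hs
  set c : ℝ × ℝ := (z₀.re, z₀.im) with hc
  set f : ℝ × ℝ → ℝ × ℝ := fun p => c + polarCoord.symm p with hf
  -- key algebraic identity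
  have key : ∀ p : ℝ × ℝ,
      Complex.measurableEquivRealProd.symm (f p) = z₀ + (p.1 : ℂ) * Complex.exp ((p.2 : ℂ) * Complex.I) := by
    intro p
    apply Complex.ext <;>
      simp [hf, hc, Complex.measurableEquivRealProd_symm_apply, Complex.exp_ofReal_mul_I_re,
        Complex.exp_ofReal_mul_I_im, Complex.add_re, Complex.add_im, Complex.mul_re,
        Complex.mul_im]
  have hdist : ∀ p : ℝ × ℝ, p ∈ s → dist (Complex.measurableEquivRealProd.symm (f p)) z₀ = p.1 := by
    intro p hp
    rw [key p, Complex.dist_eq, add_sub_cancel_left, norm_mul, Complex.norm_real,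
      Complex.norm_exp_ofReal_mul_I, mul_one, Real.norm_eq_abs, abs_of_pos (hε.trans hp.1.1)]
  -- Step 1: transfer to ℝ × ℝ
  have h1 : ∫⁻ z in A, g z = ∫⁻ p in Complex.measurableEquivRealProd.symm ⁻¹' A, g (Complex.measurableEquivRealProd.symm p) :=
    ((Complex.volume_preserving_equiv_real_prod.symm Complex.measurableEquivRealProd).setLIntegral_comp_preimage_emb
      Complex.measurableEquivRealProd.symm.measurableEmbedding g A).symm
  rw [h1]
  -- Step 2: the preimage is a.e. equal to `f '' s`
  have himage : f '' s ⊆ Complex.measurableEquivRealProd.symm ⁻¹' A := by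
    rintro q ⟨p, hp, rfl⟩
    simp only [Set.mem_preimage, hA, Set.mem_setOf_eq, hdist p hp]
    exact ⟨hp.1.1, hp.1.2⟩
  have hnull : (volume : Measure (ℝ × ℝ)) {p : ℝ × ℝ | p.2 = z₀.im} = 0 := by
    have : {p : ℝ × ℝ | p.2 = z₀.im} = (Set.univ : Set ℝ) ×ˢ ({z₀.im} : Set ℝ) := by
      ext ⟨x, y⟩; simp [Set.mem_prod, eq_comm]
    rw [this, Measure.volume_eq_prod, Measure.prod_prod]
    simp
  have hdiff : Complex.measurableEquivRealProd.symm ⁻¹' A \ f '' s ⊆ {p : ℝ × ℝ | p.2 = z₀.im} := by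
    intro p hp
    by_contra him
    apply hp.2
    set w : ℂ := Complex.measurableEquivRealProd.symm p - z₀ with hw
    have hwim : w.im ≠ 0 := by
      simp only [hw, Complex.sub_im, Complex.measurableEquivRealProd_symm_apply]
      exact sub_ne_zero.2 him
    have habs : ε < ‖w‖ ∧ ‖w‖ < ε₀ := by
      have := hp.1; rwa [Set.mem_preimage, hA, Set.mem_setOf_eq, Complex.dist_eq] at this
    set θ : ℝ := Complex.arg w with hθ
    have hθne : θ ≠ 0 := by
      intro h0
      apply hwim
      have := Complex.norm_mul_exp_arg_mul_I w
      rw [← hθ, h0] at this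
      simp only [Complex.ofReal_zero, zero_mul, Complex.exp_zero, mul_one] at this
      rw [← this]
      simp
    set θ' : ℝ := if 0 < θ then θ else θ + 2 * π with hθ'
    have hθ's : θ' ∈ Set.Ioo 0 (2 * π) := by
      have harg1 : -π < θ := hθ ▸ Complex.neg_pi_lt_arg w
      have harg2 : θ ≤ π := hθ ▸ Complex.arg_le_pi w
      have hπ := Real.pi_pos
      rcases lt_or_ge 0 θ with h | h
      · rw [hθ', if_pos h]
        exact ⟨h, by linarith⟩
      · rw [hθ', if_neg (not_lt.2 h)]
        have h2 : θ < 0 := lt_of_le_of_ne h (hθne)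
        exact ⟨by linarith, by linarith⟩
    have hexp : Complex.exp ((θ' : ℂ) * Complex.I) = Complex.exp ((θ : ℂ) * Complex.I) := by
      rcases lt_or_ge 0 θ with h | h
      · rw [hθ', if_pos h]
      · rw [hθ', if_neg (not_lt.2 h)]
        push_cast
        rw [add_mul, Complex.exp_add]
        simp [Complex.exp_two_pi_mul_I]
    refine ⟨(‖w‖, θ'), ⟨habs, hθ's⟩, ?_⟩
    apply Complex.measurableEquivRealProd.symm.injective
    rw [key]
    simp only
    rw [hexp, hθ, Complex.norm_mul_exp_arg_mul_I w, hw]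
    ring
  have haeeq : Complex.measurableEquivRealProd.symm ⁻¹' A =ᵐ[volume] f '' s := by
    rw [MeasureTheory.ae_eq_set]
    constructor
    · exact measure_mono_null hdiff hnull
    · rw [Set.diff_eq_empty.2 himage]; simp
  rw [setLIntegral_congr haeeq]
  -- Step 3: change of variables
  set f' : ℝ × ℝ → (ℝ × ℝ) →L[ℝ] (ℝ × ℝ) := fun p =>
    LinearMap.toContinuousLinearMap (Matrix.toLin (Module.Basis.finTwoProd ℝ) (Module.Basis.finTwoProd ℝ)
      !![Real.cos p.2, -p.1 * Real.sin p.2; Real.sin p.2, p.1 * Real.cos p.2]) with hf'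
  have hsm : MeasurableSet s := measurableSet_Ioo.prod measurableSet_Ioo
  have hderiv : ∀ p ∈ s, HasFDerivWithinAt f (f' p) s p := fun p _ =>
    ((hasFDerivAt_polarCoord_symm p).const_add c).hasFDerivWithinAt
  have hdet : ∀ p : ℝ × ℝ, (f' p).det = p.1 := by
    intro p
    conv_rhs => rw [← one_mul p.1, ← Real.cos_sq_add_sin_sq p.2]
    simp only [hf', neg_mul, LinearMap.det_toContinuousLinearMap, LinearMap.det_toLin,
      Matrix.det_fin_two_of, sub_neg_eq_add]
    ring
  have hinj : Set.InjOn f s := by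
    intro p hp q hq hfpq
    have h1 : z₀ + (p.1 : ℂ) * Complex.exp ((p.2 : ℂ) * Complex.I)
        = z₀ + (q.1 : ℂ) * Complex.exp ((q.2 : ℂ) * Complex.I) := by
      rw [← key, ← key, hfpq]
    have h2 : (p.1 : ℂ) * Complex.exp ((p.2 : ℂ) * Complex.I)
        = (q.1 : ℂ) * Complex.exp ((q.2 : ℂ) * Complex.I) := by
      exact add_left_cancel h1
    have hp1 : 0 < p.1 := hε.trans hp.1.1
    have hq1 : 0 < q.1 := hε.trans hq.1.1
    have habs : p.1 = q.1 := by
      have := congrArg (fun z : ℂ => ‖z‖) h2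
      simpa [Complex.norm_exp_ofReal_mul_I, abs_of_pos hp1, abs_of_pos hq1] using this
    have hexp : Complex.exp ((p.2 : ℂ) * Complex.I) = Complex.exp ((q.2 : ℂ) * Complex.I) := by
      rw [habs] at h2
      exact mul_left_cancel₀ (by exact_mod_cast hq1.ne') h2
    obtain ⟨n, hn⟩ := Complex.exp_eq_exp_iff_exists_int.1 hexp
    have hreal : p.2 = q.2 + n * (2 * π) := by
      have : ((p.2 : ℂ)) * Complex.I = ((q.2 + n * (2 * π) : ℝ) : ℂ) * Complex.I := by
        rw [hn]; push_cast; ring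
      have := mul_right_cancel₀ Complex.I_ne_zero this
      exact_mod_cast this
    have hn0 : n = 0 := by
      have h1 := hp.2.1; have h2 := hp.2.2; have h3 := hq.2.1; have h4 := hq.2.2
      have hπ := Real.pi_pos
      rcases lt_trichotomy n 0 with h | h | h
      · have : (n : ℝ) ≤ -1 := by exact_mod_cast (by omega : n ≤ -1)
        nlinarith
      · exact h
      · have : (1 : ℝ) ≤ n := by exact_mod_cast h
        nlinarith
    have : p.2 = q.2 := by rw [hreal, hn0]; simp
    exact Prod.ext habs this
  rw [lintegral_image_eq_lintegral_abs_det_fderiv_mul volume hsm hderiv hinj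
    (fun p => g (Complex.measurableEquivRealProd.symm p))]
  apply setLIntegral_congr_fun hsm
  intro p hp
  dsimp only
  rw [hdet, abs_of_pos (hε.trans hp.1.1), key]

/-- The extremal function `η₀(r) = 1/(I·‖K^T_μ‖₁(z₀,r))` satisfies `∫_ε^{ε₀} η₀(r) dr = 1`
and realizes the lower bound: `∫_{A∩D} K^T_μ(z,z₀)·η₀(|z−z₀|)² dm(z) = I⁻¹`, where
`I = ∫_ε^{ε₀} dr/‖K^T_μ‖₁(z₀,r) ∈ (0, ∞)` and `A = {ε < |z−z₀| < ε₀}`. -/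
theorem ring_integral_extremal_function (D : Set ℂ) (hD : IsOpen D) (hDconn : IsConnected D)
    (μf : ℂ → ℂ) (hμm : Measurable μf)
    (hμ : ∀ᵐ z ∂(volume : Measure ℂ), z ∈ D → ‖μf z‖ < 1)
    (z₀ : ℂ) (hz₀ : z₀ ∈ closure D)
    (ε ε₀ : ℝ) (hε : 0 < ε) (hεε₀ : ε < ε₀)
    (hε₀ : ENNReal.ofReal ε₀ < ⨆ z ∈ D, edist z z₀)
    (hfin : ∀ᵐ r ∂(volume.restrict (Set.Ioo ε ε₀)), circleNormKT D μf z₀ r ≠ ⊤)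
    (I : ℝ≥0∞) (hI : I = ∫⁻ r in Set.Ioo ε ε₀, (circleNormKT D μf z₀ r)⁻¹)
    (hIpos : 0 < I) (hIfin : I < ⊤)
    (η₀ : ℝ → ℝ≥0∞) (hη₀ : η₀ = fun r => (I * circleNormKT D μf z₀ r)⁻¹) :
    (∫⁻ r in Set.Ioo ε ε₀, η₀ r) = 1 ∧
    (∫⁻ z in ({z : ℂ | ε < dist z z₀ ∧ dist z z₀ < ε₀} ∩ D),
        tangentDilatation D μf z₀ z * (η₀ (dist z z₀)) ^ 2) = I⁻¹ := by
  have hI0 : I ≠ 0 := hIpos.ne'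
  have hItop : I ≠ ⊤ := hIfin.ne
  have hKcm : Measurable (circleNormKT D μf z₀) := circleNormKT_measurable D hD μf hμm z₀
  have hK : Measurable (tangentDilatation D μf z₀) := tangentDilatation_measurable D hD μf hμm z₀
  constructor
  · have h : ∀ r, η₀ r = I⁻¹ * (circleNormKT D μf z₀ r)⁻¹ := by
      intro r; rw [hη₀]; exact ENNReal.mul_inv (Or.inl hI0) (Or.inl hItop)
    simp_rw [h]
    rw [lintegral_const_mul' _ _ (ENNReal.inv_ne_top.2 hI0), ← hI]
    exact ENNReal.inv_mul_cancel hI0 hItop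
  · set g : ℂ → ℝ≥0∞ := fun z => tangentDilatation D μf z₀ z * η₀ (dist z z₀) ^ 2 with hg
    have hη₀m : Measurable η₀ := by
      rw [hη₀]; exact (measurable_const.mul hKcm).inv
    have hgm : Measurable g :=
      hK.mul ((hη₀m.comp (continuous_id.dist continuous_const).measurable).pow_const 2)
    have hstepA : ∫⁻ z in ({z : ℂ | ε < dist z z₀ ∧ dist z z₀ < ε₀} ∩ D), g z
        = ∫⁻ z in {z : ℂ | ε < dist z z₀ ∧ dist z z₀ < ε₀}, g z := by
      have hind : Set.indicator D g = g := by
        funext z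
        by_cases hz : z ∈ D
        · rw [Set.indicator_of_mem hz]
        · rw [Set.indicator_of_notMem hz]
          have h0 : tangentDilatation D μf z₀ z = 0 := by
            unfold tangentDilatation; rw [Set.indicator_of_notMem hz]
          rw [hg]; simp only [h0, zero_mul]
      rw [Set.inter_comm, ← Measure.restrict_restrict hD.measurableSet,
        ← lintegral_indicator hD.measurableSet, hind]
    show ∫⁻ z in _, g z = I⁻¹
    rw [hstepA, lintegral_annulus z₀ hε hεε₀ g hgm]
    have hstepC : ∫⁻ p in Set.Ioo ε ε₀ ×ˢ Set.Ioo 0 (2 * Real.pi),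
          ENNReal.ofReal p.1 * g (z₀ + (p.1:ℂ) * Complex.exp ((p.2:ℂ) * Complex.I))
        = ∫⁻ p in Set.Ioo ε ε₀ ×ˢ Set.Ioo 0 (2 * Real.pi),
          (η₀ p.1 ^ 2 * ENNReal.ofReal p.1) *
            tangentDilatation D μf z₀ (z₀ + (p.1:ℂ) * Complex.exp ((p.2:ℂ) * Complex.I)) := by
      apply setLIntegral_congr_fun (measurableSet_Ioo.prod measurableSet_Ioo)
      intro p hp
      have hd : dist (z₀ + (p.1:ℂ) * Complex.exp ((p.2:ℂ) * Complex.I)) z₀ = p.1 := by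
        rw [Complex.dist_eq, add_sub_cancel_left, norm_mul, Complex.norm_real,
          Complex.norm_exp_ofReal_mul_I, mul_one, Real.norm_eq_abs, abs_of_pos (hε.trans hp.1.1)]
      rw [hg]; simp only [hd]; ring
    rw [hstepC]
    have hF : Measurable fun p : ℝ × ℝ => (η₀ p.1 ^ 2 * ENNReal.ofReal p.1) *
        tangentDilatation D μf z₀ (z₀ + (p.1:ℂ) * Complex.exp ((p.2:ℂ) * Complex.I)) :=
      (((hη₀m.comp measurable_fst).pow_const 2).mul
        (ENNReal.measurable_ofReal.comp measurable_fst)).mul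
        (hK.comp (polarMap_continuous z₀).measurable)
    rw [Measure.volume_eq_prod, ← Measure.prod_restrict, lintegral_prod _ hF.aemeasurable]
    have hinner : ∀ r : ℝ, (∫⁻ θ in Set.Ioo (0:ℝ) (2 * Real.pi),
          (η₀ r ^ 2 * ENNReal.ofReal r) *
            tangentDilatation D μf z₀ (z₀ + (r:ℂ) * Complex.exp ((θ:ℂ) * Complex.I)))
        = η₀ r ^ 2 * circleNormKT D μf z₀ r := by
      intro r
      have hKθ : Measurable fun θ : ℝ =>
          tangentDilatation D μf z₀ (z₀ + (r:ℂ) * Complex.exp ((θ:ℂ) * Complex.I)) :=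
        hK.comp ((polarMap_continuous z₀).measurable.comp
          (measurable_const.prodMk measurable_id))
      rw [lintegral_const_mul _ hKθ, mul_assoc]
      rfl
    simp only
    simp_rw [hinner]
    have hKne0 : ∀ᵐ r ∂(volume.restrict (Set.Ioo ε ε₀)), circleNormKT D μf z₀ r ≠ 0 := by
      have h := ae_lt_top hKcm.inv (hI ▸ hItop)
      filter_upwards [h] with r hr
      exact (ENNReal.inv_lt_top.1 hr).ne'
    have hae : ∀ᵐ r ∂(volume.restrict (Set.Ioo ε ε₀)),
        η₀ r ^ 2 * circleNormKT D μf z₀ r = I⁻¹ ^ 2 * (circleNormKT D μf z₀ r)⁻¹ := by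
      filter_upwards [hfin, hKne0] with r h1 h2
      rw [hη₀]; simp only
      rw [ENNReal.mul_inv (Or.inl hI0) (Or.inr h2), mul_pow, mul_assoc,
        pow_two (circleNormKT D μf z₀ r)⁻¹, mul_assoc, ENNReal.inv_mul_cancel h2 h1, mul_one]
    rw [lintegral_congr_ae hae,
      lintegral_const_mul' _ _ (ENNReal.pow_ne_top (ENNReal.inv_ne_top.2 hI0)), ← hI,
      pow_two, mul_assoc, ENNReal.inv_mul_cancel hI0 hItop, mul_one]
end
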